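/- arXiv:1512.09207 — 3 statements merged into one kernel-verified Lean document; each statement's English description precedes it below -/
import Mathlib

section
/- For each linear context-free grammar G there exists a grammar G_k in linear-Dyck normal form such that L(G) = L(G_k); conversely, every grammar in linear-Dyck normal form generates a linear language. -/
namespace CS

/-! ### Brackets and Dyck languages -/

/-- A bracket over `k` letters: `(i, true)` is the left bracket `[ᵢ` and
`(i, false)` is the right bracket `]ᵢ`. -/
abbrev Bracket (k : ℕ) : Type := Fin k × Bool

/-- The one-sided Dyck language `D_k` over `k` letters, i.e. the language generated by the
context-free grammar with rules `S → [ᵢ S ]ᵢ`, `S → SS`, `S → [ᵢ ]ᵢ` for `1 ≤ i ≤ k`. -/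
inductive IsDyck {k : ℕ} : List (Bracket k) → Prop
  | pair (i : Fin k) : IsDyck [(i, true), (i, false)]
  | wrap (i : Fin k) {w : List (Bracket k)} (hw : IsDyck w) :
      IsDyck ((i, true) :: w ++ [(i, false)])
  | concat {u v : List (Bracket k)} (hu : IsDyck u) (hv : IsDyck v) : IsDyck (u ++ v)

/-- The number of left (open) brackets in `w`. -/
def opens {k : ℕ} (w : List (Bracket k)) : ℕ := (w.filter fun b => b.2).length

/-- The number of right (close) brackets in `w`. -/
def closes {k : ℕ} (w : List (Bracket k)) : ℕ := (w.filter fun b => !b.2).length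

/-- A string is balanced if it has as many left brackets as right brackets and every prefix
has at least as many left brackets as right brackets.  (This is the balancedness of the image
of the string under the homomorphism `h` sending every `[ᵢ` to `[₁` and every `]ᵢ` to `]₁`.) -/
def IsBalanced {k : ℕ} (w : List (Bracket k)) : Prop :=
  opens w = closes w ∧ ∀ p : List (Bracket k), p <+: w → closes p ≤ opens p

/-- The substring `w_{i:j}` of `w` starting at the `i`-th position and ending at the `j`-th
position (1-indexed, inclusive). -/
def substr {α : Type*} (w : List α) (i j : ℕ) : List α := (w.drop (i - 1)).take (j - i + 1)

/-- `(i, j)` is a matched pair of `w` if `1 ≤ i ≤ j ≤ |w|` and `h(w_{i:j})` is balanced. -/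
def MatchedPair {k : ℕ} (w : List (Bracket k)) (i j : ℕ) : Prop :=
  1 ≤ i ∧ i ≤ j ∧ j ≤ w.length ∧ IsBalanced (substr w i j)

/-- `(i, j)` is a nested pair of `w` if it is a matched pair and either `j = i + 1` or
`(i + 1, j - 1)` is a matched pair. -/
def NestedPair {k : ℕ} (w : List (Bracket k)) (i j : ℕ) : Prop :=
  MatchedPair w i j ∧ (j = i + 1 ∨ MatchedPair w (i + 1) (j - 1))

/-- The homomorphism `h_{k'}` keeping only the brackets indexed by `k'` (sent to `[₁`/`]₁`)
and erasing all other brackets. -/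
def projIdx {k : ℕ} (i : Fin k) (w : List (Bracket k)) : List (Bracket 1) :=
  (w.filter fun b => decide (b.1 = i)).map fun b => ((0 : Fin 1), b.2)

/-! ### Grammars: Chomsky and Dyck normal forms -/

variable {T : Type}

/-- Chomsky normal form: every rule has the form `A → BC` or `A → a`, except possibly
`S → λ`, and the initial nonterminal never occurs on the right-hand side of a rule. -/
def IsChomskyNF (g : ContextFreeGrammar T) : Prop :=
  (∀ r ∈ g.rules,
      (∃ B C : g.NT, r.output = [Symbol.nonterminal B, Symbol.nonterminal C]) ∨
      (∃ a : T, r.output = [Symbol.terminal a]) ∨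
      (r.input = g.initial ∧ r.output = [])) ∧
  (∀ r ∈ g.rules, Symbol.nonterminal g.initial ∉ r.output)

/-- Dyck normal form (Definition 1.1):
(1) Chomsky normal form;
(2) if `A → a` with `A ≠ S` then no other rule rewrites `A`;
(3) if some rule `X → AB` is in `P` then no rule of the form `X' → B'A` is in `P`
    (equivalently, no nonterminal occurs both as a left member and as a right member of
    right-hand sides of two-nonterminal rules);
(4) for rules `X → AB` and `X' → A'B` one has `A = A'`, and for rules `X → AB` and
    `X' → AB'` one has `B = B'`. -/
def IsDyckNF (g : ContextFreeGrammar T) : Prop :=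
  IsChomskyNF g ∧
  (∀ r ∈ g.rules, ∀ a : T, r.output = [Symbol.terminal a] → r.input ≠ g.initial →
      ∀ r' ∈ g.rules, r'.input = r.input → r' = r) ∧
  (∀ r ∈ g.rules, ∀ r' ∈ g.rules, ∀ A B B' : g.NT,
      r.output = [Symbol.nonterminal A, Symbol.nonterminal B] →
      r'.output ≠ [Symbol.nonterminal B', Symbol.nonterminal A]) ∧
  (∀ r ∈ g.rules, ∀ r' ∈ g.rules, ∀ A A' B B' : g.NT,
      r.output = [Symbol.nonterminal A, Symbol.nonterminal B] →
      r'.output = [Symbol.nonterminal A', Symbol.nonterminal B'] →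
      (B = B' → A = A') ∧ (A = A' → B = B'))

/-- Extension of a map on nonterminals to a map on symbols, acting as the identity on
terminal symbols. -/
def mapSym {N N' : Type*} (f : N → N') : Symbol T N → Symbol T N'
  | .terminal t => .terminal t
  | .nonterminal A => .nonterminal (f A)

/-- One leftmost derivation step rewriting the (leftmost) nonterminal `A`:
everything to the left of the rewritten occurrence of `A` is terminal. -/
def LeftmostStep (g : ContextFreeGrammar T) (u v : List (Symbol T g.NT)) (A : g.NT) : Prop :=
  ∃ r ∈ g.rules, r.input = A ∧ ∃ (p : List T) (s : List (Symbol T g.NT)),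
    u = p.map Symbol.terminal ++ Symbol.nonterminal A :: s ∧
    v = p.map Symbol.terminal ++ r.output ++ s

/-- One leftmost derivation step. -/
def LeftmostProduces (g : ContextFreeGrammar T) (u v : List (Symbol T g.NT)) : Prop :=
  ∃ A : g.NT, LeftmostStep g u v A

/-- `LmTrace g u v l` : there is a leftmost derivation in `g` from `u` to `v` whose
consecutively rewritten nonterminals are listed (in order) in `l`. -/
inductive LmTrace (g : ContextFreeGrammar T) :
    List (Symbol T g.NT) → List (Symbol T g.NT) → List g.NT → Prop
  | refl (u : List (Symbol T g.NT)) : LmTrace g u u []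
  | tail {u v w : List (Symbol T g.NT)} {l : List g.NT} {A : g.NT}
      (huv : LmTrace g u v l) (hvw : LeftmostStep g v w A) : LmTrace g u w (l ++ [A])

/-- `t` is the trace-word of the terminal word `w` associated with some leftmost derivation of
`w` in `g`: the concatenation of the nonterminals consecutively rewritten in the derivation,
excluding the axiom (which is the first rewritten nonterminal).  Trace-words are only
associated with derivations `S ⇒ u₁ ⇒ ⋯ ⇒ u_{2n-1} = w` with `n ≥ 2`, i.e. `t ≠ []`. -/
def IsTraceWord (g : ContextFreeGrammar T) (w : List T) (t : List g.NT) : Prop :=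
  t ≠ [] ∧ LmTrace g [Symbol.nonterminal g.initial] (w.map Symbol.terminal) (g.initial :: t)

/-- `A` is rewritten by a terminal rule `A → t` (i.e. `φ(A) ∈ T`). -/
def RewritesToTerminal (g : ContextFreeGrammar T) (A : g.NT) : Prop :=
  ∃ r ∈ g.rules, r.input = A ∧ ∃ t : T, r.output = [Symbol.terminal t]

/-- The rule `A → a` belongs to the grammar. -/
def TerminalRule (g : ContextFreeGrammar T) (A : g.NT) (a : T) : Prop :=
  ∃ r ∈ g.rules, r.input = A ∧ r.output = [Symbol.terminal a]

/-- Linear grammar: all rules are of the forms `X → λ`, `X → t`, `X → tY`, `X → Yt`,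
`X → t₁Yt₂`. -/
def IsLinear (g : ContextFreeGrammar T) : Prop :=
  ∀ r ∈ g.rules,
    r.output = [] ∨
    (∃ t : T, r.output = [Symbol.terminal t]) ∨
    (∃ (t : T) (Y : g.NT), r.output = [Symbol.terminal t, Symbol.nonterminal Y]) ∨
    (∃ (t : T) (Y : g.NT), r.output = [Symbol.nonterminal Y, Symbol.terminal t]) ∨
    (∃ (t₁ t₂ : T) (Y : g.NT),
      r.output = [Symbol.terminal t₁, Symbol.nonterminal Y, Symbol.terminal t₂])

/-- Linear-Dyck normal form: Dyck normal form with `N⁽³⁾ = ∅`, i.e. in every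
two-nonterminal rule `X → AB` at least one of `A`, `B` is rewritten by a terminal rule. -/
def IsLinearDyckNF (g : ContextFreeGrammar T) : Prop :=
  IsDyckNF g ∧
  ∀ r ∈ g.rules, ∀ A B : g.NT,
    r.output = [Symbol.nonterminal A, Symbol.nonterminal B] →
    (RewritesToTerminal g A ∨ RewritesToTerminal g B)

/-- `(A, B)` is a pairwise pair of brackets in `N⁽¹⁾`: it occurs as the right-hand side of a
two-nonterminal rule and both members are rewritten by terminal rules. -/
def IsN1Pair (g : ContextFreeGrammar T) (A B : g.NT) : Prop :=
  (∃ r ∈ g.rules, r.output = [Symbol.nonterminal A, Symbol.nonterminal B]) ∧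
  RewritesToTerminal g A ∧ RewritesToTerminal g B

/-- `C` is a bracket of some pair in `N⁽¹⁾`. -/
def IsN1Bracket (g : ContextFreeGrammar T) (C : g.NT) : Prop :=
  ∃ A B : g.NT, IsN1Pair g A B ∧ (C = A ∨ C = B)

/-- The grammar over terminals `T` whose nonterminals are the axiom `S` (`none`) together
with the `2k` brackets `[₁, …, [ₖ, ]₁, …, ]ₖ`, with the given rules. -/
abbrev bracketGrammar (k : ℕ) (rs : Finset (ContextFreeRule T (Option (Bracket k)))) :
    ContextFreeGrammar T :=
  ⟨Option (Bracket k), none, rs⟩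

/-! ### Auxiliary infrastructure for the main theorem -/

section Infra

variable {g : ContextFreeGrammar.{0} T}

lemma map_terminal_inj {w w' : List T} (h : w.map (Symbol.terminal (N := g.NT)) = w'.map Symbol.terminal) :
    w = w' := by
  have : Function.Injective (Symbol.terminal (T := T) (N := g.NT)) := by
    intro a b hab; cases hab; rfl
  exact List.map_injective_iff.mpr this h

lemma no_rewrite_of_terminals {w : List T} {r : ContextFreeRule T g.NT}
    {v : List (Symbol T g.NT)} (h : r.Rewrites (w.map Symbol.terminal) v) : False := by
  obtain ⟨p, q, hpq, -⟩ := h.exists_parts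
  have : Symbol.nonterminal r.input ∈ List.map (Symbol.terminal (N := g.NT)) w := by
    rw [hpq]; simp
  simp only [List.mem_map] at this
  obtain ⟨t, -, ht⟩ := this
  cases ht

lemma derives_of_terminals {w : List T} {v : List (Symbol T g.NT)}
    (h : g.Derives (w.map Symbol.terminal) v) : v = w.map Symbol.terminal := by
  cases h.eq_or_head with
  | inl h => exact h.symm
  | inr h =>
    obtain ⟨u, ⟨r, -, hr⟩, -⟩ := h
    exact absurd hr no_rewrite_of_terminals

lemma derives_terminals_eq {w w' : List T}
    (h : g.Derives (w.map Symbol.terminal) (w'.map Symbol.terminal)) : w = w' :=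
  map_terminal_inj (derives_of_terminals h).symm

lemma derives_nt_head {A : g.NT} {s : List (Symbol T g.NT)}
    (hne : [Symbol.nonterminal A] ≠ s)
    (h : g.Derives [Symbol.nonterminal A] s) :
    ∃ r ∈ g.rules, r.input = A ∧ g.Derives r.output s := by
  cases h.eq_or_head with
  | inl h => exact absurd h hne
  | inr h =>
    obtain ⟨u, ⟨r, hrg, hr⟩, hd⟩ := h
    obtain ⟨p, q, hpq, hout⟩ := hr.exists_parts
    have hlen := congrArg List.length hpq
    simp only [List.length_append, List.length_singleton, List.length_cons,
      List.length_nil] at hlen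
    have hp : p = [] := List.length_eq_zero_iff.mp (by omega)
    have hq : q = [] := List.length_eq_zero_iff.mp (by omega)
    subst hp; subst hq
    simp only [List.nil_append, List.append_nil] at hpq hout
    refine ⟨r, hrg, ?_, ?_⟩
    · have : Symbol.nonterminal (T := T) A = Symbol.nonterminal r.input := by
        simpa using hpq
      cases this; rfl
    · rwa [← hout]

lemma derives_nt_head_word {A : g.NT} {w : List T}
    (h : g.Derives [Symbol.nonterminal A] (w.map Symbol.terminal)) :
    ∃ r ∈ g.rules, r.input = A ∧ g.Derives r.output (w.map Symbol.terminal) := by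
  refine derives_nt_head ?_ h
  cases w <;> simp

lemma derives_append_split {u v : List (Symbol T g.NT)} {w : List T}
    (h : g.Derives (u ++ v) (w.map Symbol.terminal)) :
    ∃ w₁ w₂, w = w₁ ++ w₂ ∧ g.Derives u (w₁.map Symbol.terminal) ∧
      g.Derives v (w₂.map Symbol.terminal) := by
  suffices H : ∀ a, g.Derives a (w.map Symbol.terminal) →
      ∀ u v : List (Symbol T g.NT), a = u ++ v →
      ∃ w₁ w₂, w = w₁ ++ w₂ ∧ g.Derives u (w₁.map Symbol.terminal) ∧
        g.Derives v (w₂.map Symbol.terminal) from H _ h u v rfl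
  intro a ha
  induction ha using Relation.ReflTransGen.head_induction_on with
  | refl =>
    intro u v huv
    obtain ⟨w₁, w₂, hw, h1, h2⟩ := List.map_eq_append_iff.mp huv
    exact ⟨w₁, w₂, hw, by rw [h1], by rw [h2]⟩
  | head hstep htail ih =>
    intro u v huv
    obtain ⟨r, hrg, hr⟩ := hstep
    obtain ⟨p, q, hpq, hout⟩ := hr.exists_parts
    rw [huv, List.append_assoc] at hpq
    rcases List.append_eq_append_iff.mp hpq with ⟨a', ha1, ha2⟩ | ⟨c', hc1, hc2⟩
    · -- rewrite happens inside v
      obtain ⟨w₁, w₂, hw, h1, h2⟩ := ih u (a' ++ r.output ++ q)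
        (by rw [hout, ha1]; simp [List.append_assoc])
      refine ⟨w₁, w₂, hw, h1, ?_⟩
      have hrw : r.Rewrites v (a' ++ r.output ++ q) := by
        rw [ha2, ← List.append_assoc]
        exact ContextFreeRule.rewrites_of_exists_parts r a' q
      exact (ContextFreeGrammar.Produces.trans_derives ⟨r, hrg, hrw⟩ h2)
    · rcases c' with _ | ⟨x, c''⟩
      · -- c' = [] : u = p, v = nt :: q
        simp only [List.append_nil] at hc1
        obtain ⟨w₁, w₂, hw, h1, h2⟩ := ih u (r.output ++ q)
          (by rw [hout, hc1]; simp [List.append_assoc])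
        refine ⟨w₁, w₂, hw, h1, ?_⟩
        have hrw : r.Rewrites v (r.output ++ q) := by
          have hv : v = [Symbol.nonterminal r.input] ++ q := by simpa using hc2.symm
          rw [hv]
          simpa using ContextFreeRule.rewrites_of_exists_parts r [] q
        exact (ContextFreeGrammar.Produces.trans_derives ⟨r, hrg, hrw⟩ h2)
      · -- rewrite happens inside u
        have hx : x = Symbol.nonterminal r.input ∧ q = c'' ++ v := by
          have := hc2.symm
          rw [List.cons_append] at this
          exact ⟨(List.cons.injEq _ _ _ _ ▸ this).1, ((List.cons.injEq _ _ _ _ ▸ this).2).symm⟩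
        obtain ⟨hx1, hx2⟩ := hx
        obtain ⟨w₁, w₂, hw, h1, h2⟩ := ih (p ++ r.output ++ c'') v
          (by rw [hout, hx2]; simp [List.append_assoc])
        refine ⟨w₁, w₂, hw, ?_, h2⟩
        have hrw : r.Rewrites u (p ++ r.output ++ c'') := by
          rw [hc1, hx1]
          simpa using ContextFreeRule.rewrites_of_exists_parts r p c''
        exact (ContextFreeGrammar.Produces.trans_derives ⟨r, hrg, hrw⟩ h1)

lemma derives_terminal_cons {t : T} {α : List (Symbol T g.NT)} {w : List T}
    (h : g.Derives (Symbol.terminal t :: α) (w.map Symbol.terminal)) :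
    ∃ w', w = t :: w' ∧ g.Derives α (w'.map Symbol.terminal) := by
  obtain ⟨w₁, w₂, hw, h1, h2⟩ := derives_append_split (u := [Symbol.terminal t]) (v := α) h
  have hw₁ : w₁.map (Symbol.terminal (N := g.NT)) = [t].map Symbol.terminal :=
    derives_of_terminals (w := [t]) (by simpa using h1)
  have : w₁ = [t] := map_terminal_inj hw₁
  subst this
  exact ⟨w₂, by simpa using hw, h2⟩

lemma derives_terminal_concat {t : T} {α : List (Symbol T g.NT)} {w : List T}
    (h : g.Derives (α ++ [Symbol.terminal t]) (w.map Symbol.terminal)) :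
    ∃ w', w = w' ++ [t] ∧ g.Derives α (w'.map Symbol.terminal) := by
  obtain ⟨w₁, w₂, hw, h1, h2⟩ := derives_append_split (u := α) (v := [Symbol.terminal t]) h
  have hw₂ : w₂.map (Symbol.terminal (N := g.NT)) = [t].map Symbol.terminal :=
    derives_of_terminals (w := [t]) (by simpa using h2)
  have : w₂ = [t] := map_terminal_inj hw₂
  subst this
  exact ⟨w₁, by simpa using hw, h1⟩

lemma derives_nt_split {A B : g.NT} {w : List T}
    (h : g.Derives [Symbol.nonterminal A, Symbol.nonterminal B] (w.map Symbol.terminal)) :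
    ∃ w₁ w₂, w = w₁ ++ w₂ ∧ g.Derives [Symbol.nonterminal A] (w₁.map Symbol.terminal) ∧
      g.Derives [Symbol.nonterminal B] (w₂.map Symbol.terminal) :=
  derives_append_split (u := [Symbol.nonterminal A]) (v := [Symbol.nonterminal B]) h

lemma mem_of_derives_nil
    (h0 : ∀ r ∈ g.rules, r.output = [] → r.input = g.initial)
    (h1 : ∀ r ∈ g.rules, Symbol.nonterminal g.initial ∉ r.output) :
    ∀ u, g.Derives u [] → ∀ s ∈ u, s = Symbol.nonterminal g.initial := by
  intro u hu
  induction hu using Relation.ReflTransGen.head_induction_on with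
  | refl => simp
  | head hstep _ ih =>
    obtain ⟨r, hrg, hr⟩ := hstep
    obtain ⟨p, q, hpq, hout⟩ := hr.exists_parts
    have ihv : ∀ s ∈ p ++ r.output ++ q, s = Symbol.nonterminal g.initial := by
      rw [← hout]; exact ih
    have honil : r.output = [] := by
      cases ho : r.output with
      | nil => rfl
      | cons x xs =>
        exfalso
        have hxm : x ∈ p ++ r.output ++ q := by simp [ho]
        have hx := ihv x hxm
        refine h1 r hrg ?_
        rw [← hx, ho]; simp
    intro s hs
    rw [hpq] at hs
    rcases List.mem_append.mp hs with hs' | hs'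
    · rcases List.mem_append.mp hs' with hs'' | hs''
      · exact ihv s (by simp [hs''])
      · have : s = Symbol.nonterminal r.input := by simpa using hs''
        rw [this, h0 r hrg honil]
    · exact ihv s (by simp [hs'])

lemma derives_nil_input_initial
    (h0 : ∀ r ∈ g.rules, r.output = [] → r.input = g.initial)
    (h1 : ∀ r ∈ g.rules, Symbol.nonterminal g.initial ∉ r.output)
    {A : g.NT} (h : g.Derives [Symbol.nonterminal A] []) : A = g.initial := by
  have := mem_of_derives_nil h0 h1 _ h (Symbol.nonterminal A) (by simp)
  cases this; rfl

lemma derives_map_sandwich {p s : List T} {α : List (Symbol T g.NT)} {w : List T}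
    (h : g.Derives α (w.map Symbol.terminal)) :
    g.Derives (p.map Symbol.terminal ++ α ++ s.map Symbol.terminal)
      ((p ++ w ++ s).map Symbol.terminal) := by
  have h1 := (h.append_left (p.map Symbol.terminal)).append_right (s.map Symbol.terminal)
  simpa using h1

end Infra

/-! ### From linear-Dyck normal form to a linear grammar -/

section Dir2

variable {g : ContextFreeGrammar.{0} T}

/-- A terminal witnessing `RewritesToTerminal g A`. -/
noncomputable def termWitness {A : g.NT} (h : RewritesToTerminal g A) : T :=
  h.choose_spec.2.2.choose

lemma termWitness_spec {A : g.NT} (h : RewritesToTerminal g A) :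
    h.choose ∈ g.rules ∧ h.choose.input = A ∧
      h.choose.output = [Symbol.terminal (termWitness h)] :=
  ⟨h.choose_spec.1, h.choose_spec.2.1, h.choose_spec.2.2.choose_spec⟩

lemma derives_termWitness {A : g.NT} (h : RewritesToTerminal g A) :
    g.Derives [Symbol.nonterminal A] ([termWitness h].map Symbol.terminal) := by
  obtain ⟨hm, hi, ho⟩ := termWitness_spec h
  refine (ContextFreeGrammar.Produces.single ⟨h.choose, hm, ?_⟩)
  have := ContextFreeRule.Rewrites.input_output (r := h.choose)
  rw [hi, ho] at this
  simpa using this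

lemma dyck_terminal_unique (hd : IsDyckNF g) {A : g.NT} (h : RewritesToTerminal g A)
    (hA : A ≠ g.initial) {r : ContextFreeRule T g.NT} (hr : r ∈ g.rules) (hin : r.input = A) :
    r.output = [Symbol.terminal (termWitness h)] := by
  obtain ⟨hm, hi, ho⟩ := termWitness_spec h
  have := hd.2.1 h.choose hm (termWitness h) ho (by rw [hi]; exact hA) r hr
    (by rw [hin, hi])
  rw [this, ho]

lemma dyck_derives_terminal (hd : IsDyckNF g) {A : g.NT} (h : RewritesToTerminal g A)
    (hA : A ≠ g.initial) {w : List T}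
    (hw : g.Derives [Symbol.nonterminal A] (w.map Symbol.terminal)) :
    w = [termWitness h] := by
  obtain ⟨r, hrg, hin, hout⟩ := derives_nt_head_word hw
  rw [dyck_terminal_unique hd h hA hrg hin] at hout
  have := derives_of_terminals (w := [termWitness h]) (by simpa using hout)
  exact (map_terminal_inj this.symm).symm

open Classical in
/-- Replacement of a two-nonterminal right-hand side by a linear one. -/
noncomputable def delinOut (g : ContextFreeGrammar.{0} T) :
    List (Symbol T g.NT) → List (Symbol T g.NT)
  | [Symbol.nonterminal A, Symbol.nonterminal B] =>
    if h : RewritesToTerminal g A then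
      [Symbol.terminal (termWitness h), Symbol.nonterminal B]
    else if h' : RewritesToTerminal g B then
      [Symbol.nonterminal A, Symbol.terminal (termWitness h')]
    else [Symbol.nonterminal A, Symbol.nonterminal B]
  | o => o

open Classical in
/-- The linear grammar obtained from a grammar in linear-Dyck normal form. -/
noncomputable def mkLinear (g : ContextFreeGrammar.{0} T) : ContextFreeGrammar T :=
  ⟨g.NT, g.initial, g.rules.image fun r => ⟨r.input, delinOut g r.output⟩⟩

attribute [reducible] mkLinear

lemma delinOut_nil : delinOut g [] = [] := rfl

lemma delinOut_term (t : T) : delinOut g [Symbol.terminal t] = [Symbol.terminal t] := rfl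

lemma mem_mkLinear_iff {r' : ContextFreeRule T g.NT} :
    r' ∈ (mkLinear g).rules ↔ ∃ r ∈ g.rules, r' = ⟨r.input, delinOut g r.output⟩ := by
  classical
  constructor
  · intro h
    simp only [mkLinear, Finset.mem_image] at h
    obtain ⟨r, hr, hrr⟩ := h
    exact ⟨r, hr, hrr.symm⟩
  · rintro ⟨r, hr, rfl⟩
    simp only [mkLinear, Finset.mem_image]
    exact ⟨r, hr, rfl⟩

lemma dir2_main (hk : IsLinearDyckNF g) :
    ∀ (w : List T) (X : g.NT),
      ((mkLinear g).Derives [Symbol.nonterminal X] (w.map Symbol.terminal) ↔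
        g.Derives [Symbol.nonterminal X] (w.map Symbol.terminal)) := by
  have hd := hk.1
  have hn3 := hk.2
  have hch1 := hd.1.1
  have hch2 := hd.1.2
  have hg0 : ∀ r ∈ g.rules, r.output = [] → r.input = g.initial := by
    intro r hr ho
    rcases hch1 r hr with ⟨B, C, h⟩ | ⟨a, h⟩ | ⟨h1, h2⟩ <;> simp_all
  have hprod : ∀ (gg : ContextFreeGrammar.{0} T) (r : ContextFreeRule T gg.NT),
      r ∈ gg.rules → ∀ X, r.input = X → gg.Produces [Symbol.nonterminal X] r.output := by
    intro gg r hr X hX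
    exact ⟨r, hr, by rw [← hX]; exact ContextFreeRule.Rewrites.input_output⟩
  have hne_g : ∀ (A : g.NT), A ≠ g.initial → ∀ w : List T,
      g.Derives [Symbol.nonterminal A] (w.map Symbol.terminal) → w ≠ [] := by
    intro A hA w hdrv hw0
    subst hw0
    exact hA (derives_nil_input_initial hg0 hch2 (by simpa using hdrv))
  suffices H : ∀ n, ∀ (w : List T), w.length = n → ∀ X : g.NT,
      ((mkLinear g).Derives [Symbol.nonterminal X] (w.map Symbol.terminal) ↔
        g.Derives [Symbol.nonterminal X] (w.map Symbol.terminal)) from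
    fun w X => H w.length w rfl X
  intro n
  induction n using Nat.strong_induction_on with
  | _ n ihn =>
  intro w hwn X
  constructor
  · -- mkLinear derivation to g derivation
    intro h
    obtain ⟨r', hr', hin, hout⟩ := derives_nt_head (by cases w <;> simp) h
    obtain ⟨r, hr, rfl⟩ := mem_mkLinear_iff.mp hr'
    simp only at hin hout
    rcases hch1 r hr with ⟨A, B, hBC⟩ | ⟨a, ha⟩ | ⟨hi, ho⟩
    · have hstep : g.Produces [Symbol.nonterminal X]
          [Symbol.nonterminal A, Symbol.nonterminal B] := by
        have := hprod g r hr X hin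
        rwa [hBC] at this
      rcases hn3 r hr A B hBC with hA | hB
      · simp only [hBC, delinOut, dif_pos hA] at hout
        obtain ⟨w₂, rfl, h2⟩ := derives_terminal_cons hout
        have hg2 : g.Derives [Symbol.nonterminal B] (w₂.map Symbol.terminal) :=
          (ihn w₂.length (by simp at hwn; omega) w₂ rfl B).mp h2
        refine hstep.trans_derives ?_
        have d1 := (derives_termWitness hA).append_right [Symbol.nonterminal B]
        have d2 := hg2.append_left (([termWitness hA]).map Symbol.terminal)
        have := d1.trans (by simpa using d2)
        simpa using this
      · by_cases hA : RewritesToTerminal g A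
        · simp only [hBC, delinOut, dif_pos hA] at hout
          obtain ⟨w₂, rfl, h2⟩ := derives_terminal_cons hout
          have hg2 : g.Derives [Symbol.nonterminal B] (w₂.map Symbol.terminal) :=
            (ihn w₂.length (by simp at hwn; omega) w₂ rfl B).mp h2
          refine hstep.trans_derives ?_
          have d1 := (derives_termWitness hA).append_right [Symbol.nonterminal B]
          have d2 := hg2.append_left (([termWitness hA]).map Symbol.terminal)
          have := d1.trans (by simpa using d2)
          simpa using this
        · simp only [hBC, delinOut, dif_neg hA, dif_pos hB] at hout
          obtain ⟨w₁, rfl, h1⟩ := derives_terminal_concat (g := mkLinear g)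
            (α := [Symbol.nonterminal A]) (by simpa using hout)
          have hg1 : g.Derives [Symbol.nonterminal A] (w₁.map Symbol.terminal) :=
            (ihn w₁.length (by simp at hwn; omega) w₁ rfl A).mp h1
          refine hstep.trans_derives ?_
          have d1 := (derives_termWitness hB).append_left [Symbol.nonterminal A]
          have d2 := hg1.append_right (([termWitness hB]).map Symbol.terminal)
          have := (show g.Derives [Symbol.nonterminal A, Symbol.nonterminal B]
              ([Symbol.nonterminal A] ++ ([termWitness hB]).map Symbol.terminal)
            from by simpa using d1).trans (by simpa using d2)
          simpa using this
    · simp only [ha, delinOut_term] at hout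
      have := derives_of_terminals (w := [a]) (by simpa using hout)
      have hwa : w = [a] := map_terminal_inj this.symm |>.symm
      subst hwa
      have := hprod g r hr X hin
      rw [ha] at this
      simpa using this.single
    · simp only [ho, delinOut_nil] at hout
      have := derives_of_terminals (w := []) (by simpa using hout)
      have hw0 : w = [] := by
        cases w
        · rfl
        · simp at this
      subst hw0
      have := hprod g r hr X hin
      rw [ho] at this
      simpa using this.single
  · -- g derivation to mkLinear derivation
    intro h
    obtain ⟨r, hr, hin, hout⟩ := derives_nt_head (by cases w <;> simp) h
    have hrule' : (⟨r.input, delinOut g r.output⟩ : ContextFreeRule T g.NT) ∈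
        (mkLinear g).rules := mem_mkLinear_iff.mpr ⟨r, hr, rfl⟩
    have hstep' : (mkLinear g).Produces [Symbol.nonterminal X] (delinOut g r.output) :=
      hprod (mkLinear g) _ hrule' X hin
    rcases hch1 r hr with ⟨A, B, hBC⟩ | ⟨a, ha⟩ | ⟨hi, ho⟩
    · rw [hBC] at hout
      obtain ⟨w₁, w₂, rfl, h1, h2⟩ := derives_nt_split hout
      have hAne : A ≠ g.initial := by
        intro hh
        exact hch2 r hr (by rw [hBC, hh]; simp)
      have hBne : B ≠ g.initial := by
        intro hh
        exact hch2 r hr (by rw [hBC, hh]; simp)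
      rcases hn3 r hr A B hBC with hA | hB
      · have hw1 : w₁ = [termWitness hA] := dyck_derives_terminal hd hA hAne h1
        subst hw1
        have hg2 : (mkLinear g).Derives [Symbol.nonterminal B] (w₂.map Symbol.terminal) :=
          (ihn w₂.length (by simp at hwn; omega) w₂ rfl B).mpr h2
        refine hstep'.trans_derives ?_
        rw [hBC]
        simp only [delinOut, dif_pos hA]
        have := hg2.append_left [Symbol.terminal (termWitness hA)]
        simpa using this
      · by_cases hA : RewritesToTerminal g A
        · have hw1 : w₁ = [termWitness hA] := dyck_derives_terminal hd hA hAne h1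
          subst hw1
          have hg2 : (mkLinear g).Derives [Symbol.nonterminal B] (w₂.map Symbol.terminal) :=
            (ihn w₂.length (by simp at hwn; omega) w₂ rfl B).mpr h2
          refine hstep'.trans_derives ?_
          rw [hBC]
          simp only [delinOut, dif_pos hA]
          have := hg2.append_left [Symbol.terminal (termWitness hA)]
          simpa using this
        · have hw2 : w₂ = [termWitness hB] := dyck_derives_terminal hd hB hBne h2
          subst hw2
          have hg1 : (mkLinear g).Derives [Symbol.nonterminal A] (w₁.map Symbol.terminal) :=
            (ihn w₁.length (by simp at hwn; omega) w₁ rfl A).mpr h1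
          refine hstep'.trans_derives ?_
          rw [hBC]
          simp only [delinOut, dif_neg hA, dif_pos hB]
          have := hg1.append_right [Symbol.terminal (termWitness hB)]
          simpa using this
    · rw [ha] at hout
      have := derives_of_terminals (w := [a]) (by simpa using hout)
      have hwa : w = [a] := map_terminal_inj this.symm |>.symm
      subst hwa
      have := hstep'
      rw [ha, delinOut_term] at this
      simpa using this.single
    · rw [ho] at hout
      have := derives_of_terminals (w := []) (by simpa using hout)
      have hw0 : w = [] := by
        cases w
        · rfl
        · simp at this
      subst hw0
      have := hstep'
      rw [ho, delinOut_nil] at this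
      simpa using this.single

lemma dir2_language (hk : IsLinearDyckNF g) : (mkLinear g).language = g.language := by
  ext w
  simp only [ContextFreeGrammar.mem_language_iff]
  exact dir2_main hk w g.initial

lemma dir2_isLinear (hk : IsLinearDyckNF g) : IsLinear (mkLinear g) := by
  intro r' hr'
  obtain ⟨r, hr, rfl⟩ := mem_mkLinear_iff.mp hr'
  have hch1 := hk.1.1.1
  rcases hch1 r hr with ⟨A, B, hBC⟩ | ⟨a, ha⟩ | ⟨hi, ho⟩
  · rcases hk.2 r hr A B hBC with hA | hB
    · right; right; left
      exact ⟨termWitness hA, B, by simp [hBC, delinOut, dif_pos hA]⟩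
    · by_cases hA : RewritesToTerminal g A
      · right; right; left
        exact ⟨termWitness hA, B, by simp [hBC, delinOut, dif_pos hA]⟩
      · right; right; right; left
        exact ⟨termWitness hB, A, by simp [hBC, delinOut, dif_neg hA, dif_pos hB]⟩
  · right; left
    exact ⟨a, by simp [ha, delinOut_term]⟩
  · left
    simp [ho, delinOut_nil]

end Dir2

/-! ### From a linear grammar to linear-Dyck normal form -/

section Dir1

/-- Data of a linear step `X → pre · Y · post`. -/
structure LinStep (N : Type) (T : Type) where
  src : N
  pre : Option T
  tgt : N
  post : Option T

/-- Data of a finishing production `X → t₁ t₂?`. -/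
structure LinFin (N : Type) (T : Type) where
  src : N
  t1 : T
  t2 : Option T

/-- Index of a terminal-word-spelling context. -/
abbrev FIdx (N T : Type) : Type := (LinStep N T × LinFin N T) ⊕ LinFin N T

/-- Nonterminals (besides the axiom) of the linear-Dyck normal form grammar. -/
inductive LDN (N : Type) (T : Type) : Type
  | cont (σ : LinStep N T)
  | midc (σ : LinStep N T)
  | emitL (σ : LinStep N T)
  | emitP (σ : LinStep N T)
  | mid (ι : FIdx N T) (s : List T)
  | emit (ι : FIdx N T) (s : List T)

variable (G : ContextFreeGrammar.{0} T)

/-- The right-hand side of the linear rule described by `σ`. -/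
def stepOut (σ : LinStep G.NT T) : List (Symbol T G.NT) :=
  (σ.pre.map Symbol.terminal).toList ++ [Symbol.nonterminal σ.tgt] ++
    (σ.post.map Symbol.terminal).toList

/-- `X` is nullable (erased in one step). -/
def Nul (X : G.NT) : Prop := (⟨X, []⟩ : ContextFreeRule T G.NT) ∈ G.rules

/-- `σ` is a genuine step of `G`. -/
def StepP (σ : LinStep G.NT T) : Prop :=
  (⟨σ.src, stepOut G σ⟩ : ContextFreeRule T G.NT) ∈ G.rules ∧
    (σ.pre.isSome ∨ σ.post.isSome)

/-- The terminal word of a finishing production. -/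
def finWord (υ : LinFin G.NT T) : List T := υ.t1 :: υ.t2.toList

/-- `υ` is a genuine finishing production of `G` (possibly using a nullable nonterminal). -/
def FinP (υ : LinFin G.NT T) : Prop :=
  match υ.t2 with
  | none =>
      ((⟨υ.src, [Symbol.terminal υ.t1]⟩ : ContextFreeRule T G.NT) ∈ G.rules)
      ∨ (∃ Y, (⟨υ.src, [Symbol.terminal υ.t1, Symbol.nonterminal Y]⟩ :
          ContextFreeRule T G.NT) ∈ G.rules ∧ Nul G Y)
      ∨ (∃ Y, (⟨υ.src, [Symbol.nonterminal Y, Symbol.terminal υ.t1]⟩ :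
          ContextFreeRule T G.NT) ∈ G.rules ∧ Nul G Y)
  | some t₂ => ∃ Y, (⟨υ.src, [Symbol.terminal υ.t1, Symbol.nonterminal Y,
      Symbol.terminal t₂]⟩ : ContextFreeRule T G.NT) ∈ G.rules ∧ Nul G Y

/-- The steps extracted from a single rule. -/
def stepsOfRule (r : ContextFreeRule T G.NT) : List (LinStep G.NT T) :=
  match r.output with
  | [Symbol.terminal t, Symbol.nonterminal Y] => [⟨r.input, some t, Y, none⟩]
  | [Symbol.nonterminal Y, Symbol.terminal t] => [⟨r.input, none, Y, some t⟩]
  | [Symbol.terminal t₁, Symbol.nonterminal Y, Symbol.terminal t₂] =>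
      [⟨r.input, some t₁, Y, some t₂⟩]
  | _ => []

/-- All steps of `G`. -/
noncomputable def steps : List (LinStep G.NT T) := G.rules.toList.flatMap (stepsOfRule G)

open Classical in
/-- The finishing productions extracted from a single rule. -/
noncomputable def finsOfRule (r : ContextFreeRule T G.NT) : List (LinFin G.NT T) :=
  match r.output with
  | [Symbol.terminal t] => [⟨r.input, t, none⟩]
  | [Symbol.terminal t, Symbol.nonterminal Y] =>
      if Nul G Y then [⟨r.input, t, none⟩] else []
  | [Symbol.nonterminal Y, Symbol.terminal t] =>
      if Nul G Y then [⟨r.input, t, none⟩] else []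
  | [Symbol.terminal t₁, Symbol.nonterminal Y, Symbol.terminal t₂] =>
      if Nul G Y then [⟨r.input, t₁, some t₂⟩] else []
  | _ => []

/-- All finishing productions of `G`. -/
noncomputable def fins : List (LinFin G.NT T) := G.rules.toList.flatMap (finsOfRule G)

lemma stepsOfRule_sound {r : ContextFreeRule T G.NT} {σ} (h : σ ∈ stepsOfRule G r) :
    r.input = σ.src ∧ r.output = stepOut G σ ∧ (σ.pre.isSome ∨ σ.post.isSome) := by
  rcases r with ⟨inp, out⟩
  rcases out with _ | ⟨s₁, out⟩
  · simp [stepsOfRule] at h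
  rcases out with _ | ⟨s₂, out⟩
  · rcases s₁ with t | n <;> simp [stepsOfRule] at h
  rcases out with _ | ⟨s₃, out⟩
  · rcases s₁ with t | n <;> rcases s₂ with t' | n' <;> simp [stepsOfRule] at h <;>
      · subst h; simp [stepOut]
  rcases out with _ | ⟨s₄, out⟩
  · rcases s₁ with t | n <;> rcases s₂ with t' | n' <;> rcases s₃ with t'' | n'' <;>
      simp [stepsOfRule] at h
    subst h; simp [stepOut]
  · rcases s₁ with t | n <;> rcases s₂ with t' | n' <;> rcases s₃ with t'' | n'' <;>
      simp [stepsOfRule] at h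

lemma mem_steps {σ : LinStep G.NT T} : σ ∈ steps G ↔ StepP G σ := by
  constructor
  · intro h
    simp only [steps, List.mem_flatMap, Finset.mem_toList] at h
    obtain ⟨r, hr, hσ⟩ := h
    obtain ⟨h1, h2, h3⟩ := stepsOfRule_sound G hσ
    refine ⟨?_, h3⟩
    have : r = ⟨σ.src, stepOut G σ⟩ := by
      rcases r with ⟨inp, out⟩; simp_all
    rwa [← this]
  · rintro ⟨h1, h2⟩
    simp only [steps, List.mem_flatMap, Finset.mem_toList]
    refine ⟨⟨σ.src, stepOut G σ⟩, h1, ?_⟩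
    rcases σ with ⟨src, pre, tgt, post⟩
    rcases pre with _ | t <;> rcases post with _ | t' <;>
      simp_all [stepsOfRule, stepOut]

lemma finsOfRule_sound {r : ContextFreeRule T G.NT} (hr : r ∈ G.rules) {υ}
    (h : υ ∈ finsOfRule G r) : FinP G υ := by
  classical
  rcases r with ⟨inp, out⟩
  rcases out with _ | ⟨s₁, out⟩
  · simp [finsOfRule] at h
  rcases out with _ | ⟨s₂, out⟩
  · rcases s₁ with t | n <;> simp [finsOfRule] at h
    subst h; simp only [FinP]; left; assumption
  rcases out with _ | ⟨s₃, out⟩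
  · rcases s₁ with t | n <;> rcases s₂ with t' | n' <;> simp [finsOfRule] at h
    · obtain ⟨hnul, h⟩ := h; subst h; simp only [FinP]; right; left; exact ⟨n', by assumption, hnul⟩
    · obtain ⟨hnul, h⟩ := h; subst h; simp only [FinP]; right; right; exact ⟨n, by assumption, hnul⟩
  rcases out with _ | ⟨s₄, out⟩
  · rcases s₁ with t | n <;> rcases s₂ with t' | n' <;> rcases s₃ with t'' | n'' <;>
      simp [finsOfRule] at h
    obtain ⟨hnul, h⟩ := h; subst h; simp only [FinP]; exact ⟨n', by assumption, hnul⟩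
  · rcases s₁ with t | n <;> rcases s₂ with t' | n' <;> rcases s₃ with t'' | n'' <;>
      simp [finsOfRule] at h

lemma mem_fins {υ : LinFin G.NT T} : υ ∈ fins G ↔ FinP G υ := by
  classical
  constructor
  · intro h
    simp only [fins, List.mem_flatMap, Finset.mem_toList] at h
    obtain ⟨r, hr, hυ⟩ := h
    exact finsOfRule_sound G hr hυ
  · intro h
    rcases υ with ⟨src, t1, t2⟩
    simp only [fins, List.mem_flatMap, Finset.mem_toList]
    rcases t2 with _ | t₂
    · rcases h with hr | ⟨Y, hr, hY⟩ | ⟨Y, hr, hY⟩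
      · exact ⟨⟨src, [Symbol.terminal t1]⟩, hr, by simp [finsOfRule]⟩
      · exact ⟨⟨src, [Symbol.terminal t1, Symbol.nonterminal Y]⟩, hr,
          by simp [finsOfRule, if_pos hY]⟩
      · exact ⟨⟨src, [Symbol.nonterminal Y, Symbol.terminal t1]⟩, hr,
          by simp [finsOfRule, if_pos hY]⟩
    · obtain ⟨Y, hr, hY⟩ := h
      exact ⟨⟨src, [Symbol.terminal t1, Symbol.nonterminal Y, Symbol.terminal t₂]⟩, hr,
        by simp [finsOfRule, if_pos hY]⟩

variable (G : ContextFreeGrammar.{0} T)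

/-- `A` is an address for `X`: a nonterminal of the new grammar whose rules expand `X`. -/
def AddrP (X : G.NT) (A : Option (LDN G.NT T)) : Prop :=
  (A = none ∧ X = G.initial) ∨
    (∃ σ : LinStep G.NT T, StepP G σ ∧ σ.tgt = X ∧ A = some (LDN.cont σ))

open Classical in
/-- The list of addresses of `X`. -/
noncomputable def addr (X : G.NT) : List (Option (LDN G.NT T)) :=
  (if X = G.initial then [none] else []) ++
    ((steps G).filter fun σ => σ.tgt = X).map fun σ => some (LDN.cont σ)

lemma mem_addr {X : G.NT} {A} : A ∈ addr G X ↔ AddrP G X A := by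
  classical
  simp only [addr, AddrP, List.mem_append, List.mem_map, List.mem_filter, mem_steps]
  constructor
  · rintro (h | ⟨σ, ⟨h1, h2⟩, h3⟩)
    · split at h <;> simp_all
    · exact Or.inr ⟨σ, h1, by simpa using h2, h3.symm⟩
  · rintro (⟨h1, h2⟩ | ⟨σ, h1, h2, h3⟩)
    · left; simp [h1, h2]
    · exact Or.inr ⟨σ, ⟨h1, by simpa using h2⟩, h3.symm⟩

/-- The rules simulating the step `σ` at the address `A`. -/
def stRules (σ : LinStep G.NT T) (A : Option (LDN G.NT T)) :
    List (ContextFreeRule T (Option (LDN G.NT T))) :=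
  match σ.pre, σ.post with
  | some t, none =>
      [⟨A, [Symbol.nonterminal (some (LDN.emitL σ)), Symbol.nonterminal (some (LDN.cont σ))]⟩,
       ⟨some (LDN.emitL σ), [Symbol.terminal t]⟩]
  | none, some t =>
      [⟨A, [Symbol.nonterminal (some (LDN.cont σ)), Symbol.nonterminal (some (LDN.emitP σ))]⟩,
       ⟨some (LDN.emitP σ), [Symbol.terminal t]⟩]
  | some t₁, some t₂ =>
      [⟨A, [Symbol.nonterminal (some (LDN.emitL σ)), Symbol.nonterminal (some (LDN.midc σ))]⟩,
       ⟨some (LDN.midc σ),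
         [Symbol.nonterminal (some (LDN.cont σ)), Symbol.nonterminal (some (LDN.emitP σ))]⟩,
       ⟨some (LDN.emitL σ), [Symbol.terminal t₁]⟩,
       ⟨some (LDN.emitP σ), [Symbol.terminal t₂]⟩]
  | none, none => []

/-- Rules spelling out the terminal word `u` from the address `A`, in context `ι`. -/
def spell (ι : FIdx G.NT T) : Option (LDN G.NT T) → List T →
    List (ContextFreeRule T (Option (LDN G.NT T)))
  | A, [] => []
  | A, [t] => [⟨A, [Symbol.terminal t]⟩]
  | A, [t₁, t₂] =>
      [⟨A, [Symbol.nonterminal (some (LDN.emit ι [t₁, t₂])),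
            Symbol.nonterminal (some (LDN.emit ι [t₂]))]⟩,
       ⟨some (LDN.emit ι [t₁, t₂]), [Symbol.terminal t₁]⟩,
       ⟨some (LDN.emit ι [t₂]), [Symbol.terminal t₂]⟩]
  | A, t :: u =>
      ⟨A, [Symbol.nonterminal (some (LDN.emit ι (t :: u))),
           Symbol.nonterminal (some (LDN.mid ι u))]⟩ ::
      ⟨some (LDN.emit ι (t :: u)), [Symbol.terminal t]⟩ ::
      spell ι (some (LDN.mid ι u)) u

/-- The word spelled by a finishing context. -/
def sfWord (σ : LinStep G.NT T) (υ : LinFin G.NT T) : List T :=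
  σ.pre.toList ++ finWord G υ ++ σ.post.toList

open Classical in
/-- All rules of the linear-Dyck normal form grammar. -/
noncomputable def GkRules : List (ContextFreeRule T (Option (LDN G.NT T))) :=
  (if Nul G G.initial then [⟨none, []⟩] else [])
  ++ ((steps G).flatMap fun σ => (addr G σ.src).flatMap fun A => stRules G σ A)
  ++ ((steps G).flatMap fun σ => ((fins G).filter fun υ => υ.src = σ.tgt).flatMap fun υ =>
        (addr G σ.src).flatMap fun A => spell G (Sum.inl (σ, υ)) A (sfWord G σ υ))
  ++ (((fins G).filter fun υ => υ.src = G.initial).flatMap fun υ =>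
        spell G (Sum.inr υ) none (finWord G υ))

open Classical in
/-- The linear-Dyck normal form grammar associated with a linear grammar `G`. -/
noncomputable def GkG : ContextFreeGrammar T :=
  ⟨Option (LDN G.NT T), none, (GkRules G).toFinset⟩

attribute [reducible] GkG

lemma mem_GkG_rules {r : ContextFreeRule T (Option (LDN G.NT T))} :
    r ∈ (GkG G).rules ↔
      (Nul G G.initial ∧ r = ⟨none, []⟩)
      ∨ (∃ σ A, StepP G σ ∧ AddrP G σ.src A ∧ r ∈ stRules G σ A)
      ∨ (∃ σ υ A, StepP G σ ∧ FinP G υ ∧ υ.src = σ.tgt ∧ AddrP G σ.src A ∧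
          r ∈ spell G (Sum.inl (σ, υ)) A (sfWord G σ υ))
      ∨ (∃ υ, FinP G υ ∧ υ.src = G.initial ∧ r ∈ spell G (Sum.inr υ) none (finWord G υ)) := by
  classical
  show r ∈ (GkRules G).toFinset ↔ _
  rw [List.mem_toFinset]
  simp only [GkRules, List.mem_append, List.mem_flatMap, List.mem_filter, mem_steps, mem_fins,
    mem_addr, decide_eq_true_eq]
  constructor
  · rintro (((h | h) | h) | h)
    · split at h <;> simp_all
    · obtain ⟨σ, h1, A, h2, h3⟩ := h
      exact Or.inr (Or.inl ⟨σ, A, h1, h2, h3⟩)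
    · obtain ⟨σ, h1, υ, ⟨h2, h3⟩, A, h4, h5⟩ := h
      exact Or.inr (Or.inr (Or.inl ⟨σ, υ, A, h1, h2, h3, h4, h5⟩))
    · obtain ⟨υ, ⟨h1, h2⟩, h3⟩ := h
      exact Or.inr (Or.inr (Or.inr ⟨υ, h1, h2, h3⟩))
  · rintro (⟨h1, h2⟩ | ⟨σ, A, h1, h2, h3⟩ | ⟨σ, υ, A, h1, h2, h3, h4, h5⟩ | ⟨υ, h1, h2, h3⟩)
    · left; left; left; simp [h1, h2]
    · exact Or.inl (Or.inl (Or.inr ⟨σ, h1, A, h2, h3⟩))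
    · exact Or.inl (Or.inr ⟨σ, h1, υ, ⟨h2, h3⟩, A, h4, h5⟩)
    · exact Or.inr ⟨υ, ⟨h1, h2⟩, h3⟩

section SpellLemmas

open Classical in
/-- The left-hand side of the spelling rule starting at suffix `v` of `u`. -/
noncomputable def spellLhs {N : Type} (ι : FIdx N T) (A : Option (LDN N T))
    (u v : List T) : Option (LDN N T) :=
  if v = u then A else some (LDN.mid ι v)

open Classical in
/-- The second member of the spelling rule with remaining suffix `t₂ :: s`. -/
noncomputable def spellSnd {N : Type} (ι : FIdx N T) (t₂ : T) (s : List T) :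
    Option (LDN N T) :=
  if s = [] then some (LDN.emit ι [t₂]) else some (LDN.mid ι (t₂ :: s))

variable (G : ContextFreeGrammar.{0} T)

lemma spell_mem {ι : FIdx G.NT T} {A u} {r} (h : r ∈ spell G ι A u) :
    (∃ t, u = [t] ∧ r = ⟨A, [Symbol.terminal t]⟩)
  ∨ (2 ≤ u.length ∧ ∃ t s, (t :: s) <:+ u ∧
      r = ⟨some (LDN.emit ι (t :: s)), [Symbol.terminal t]⟩)
  ∨ (2 ≤ u.length ∧ ∃ t₁ t₂ s, (t₁ :: t₂ :: s) <:+ u ∧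
      r = ⟨spellLhs ι A u (t₁ :: t₂ :: s),
           [Symbol.nonterminal (some (LDN.emit ι (t₁ :: t₂ :: s))),
            Symbol.nonterminal (spellSnd ι t₂ s)]⟩) := by
  induction u generalizing A with
  | nil => simp [spell] at h
  | cons t₁ rest ih =>
    rcases rest with _ | ⟨t₂, rest⟩
    · simp only [spell, List.mem_singleton] at h
      exact Or.inl ⟨t₁, rfl, h⟩
    rcases rest with _ | ⟨t₃, rest⟩
    · simp only [spell, List.mem_cons, List.mem_singleton, List.not_mem_nil, or_false] at h
      rcases h with h | h | h
      · refine Or.inr (Or.inr ⟨by simp, t₁, t₂, [], List.suffix_refl _, ?_⟩)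
        rw [h]; simp [spellLhs, spellSnd]
      · exact Or.inr (Or.inl ⟨by simp, t₁, [t₂], List.suffix_refl _, h⟩)
      · exact Or.inr (Or.inl ⟨by simp, t₂, [], ⟨[t₁], rfl⟩, h⟩)
    · simp only [spell, List.mem_cons] at h
      rcases h with h | h | h
      · refine Or.inr (Or.inr ⟨by simp, t₁, t₂, t₃ :: rest, List.suffix_refl _, ?_⟩)
        rw [h]; simp [spellLhs, spellSnd]
      · exact Or.inr (Or.inl ⟨by simp, t₁, t₂ :: t₃ :: rest, List.suffix_refl _, h⟩)
      · rcases ih (A := some (LDN.mid ι (t₂ :: t₃ :: rest))) h with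
          ⟨t, ht, -⟩ | ⟨-, t, s, hsuf, hr⟩ | ⟨-, ta, tb, s, hsuf, hr⟩
        · simp at ht
        · exact Or.inr (Or.inl ⟨by simp, t, s, hsuf.trans (List.suffix_cons _ _), hr⟩)
        · refine Or.inr (Or.inr ⟨by simp, ta, tb, s,
            hsuf.trans (List.suffix_cons _ _), ?_⟩)
          have hlen := hsuf.length_le
          have hne : (ta :: tb :: s) ≠ t₁ :: t₂ :: t₃ :: rest := by
            intro hh; rw [hh] at hlen; simp at hlen
          rw [hr]
          congr 1
          by_cases heq : ta :: tb :: s = t₂ :: t₃ :: rest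
          · rw [spellLhs, spellLhs, if_pos heq, if_neg hne, heq]
          · rw [spellLhs, spellLhs, if_neg heq, if_neg hne]

lemma spell_emit_mem {ι : FIdx G.NT T} (A : Option (LDN G.NT T)) {u : List T} {t s}
    (hsuf : (t :: s) <:+ u) (hlen : 2 ≤ u.length) :
    (⟨some (LDN.emit ι (t :: s)), [Symbol.terminal t]⟩ :
      ContextFreeRule T (Option (LDN G.NT T))) ∈ spell G ι A u := by
  induction u generalizing A with
  | nil => simp at hlen
  | cons t₁ rest ih =>
    rcases rest with _ | ⟨t₂, rest⟩
    · simp at hlen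
    rcases List.suffix_cons_iff.mp hsuf with heq | hsuf'
    · -- t :: s = t₁ :: t₂ :: rest
      injection heq with h1 h2
      subst h1; subst h2
      rcases rest with _ | ⟨t₃, rest⟩ <;> simp [spell]
    · rcases rest with _ | ⟨t₃, rest⟩
      · -- suffix of [t₂] with cons head: t :: s = [t₂]
        have hts : t :: s = [t₂] := by
          rcases List.suffix_cons_iff.mp hsuf' with h | h
          · exact h
          · simp at h
        injection hts with h1 h2
        subst h1; subst h2
        simp [spell]
      · simp only [spell, List.mem_cons]
        exact Or.inr (Or.inr (ih _ hsuf' (by simp)))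

lemma spell_sub_shape {ι : FIdx G.NT T} {A u} {r} (h : r ∈ spell G ι A u) :
    (∃ t, r.output = [Symbol.terminal t]) ∨
    (∃ n₁ n₂ : LDN G.NT T,
      r.output = [Symbol.nonterminal (some n₁), Symbol.nonterminal (some n₂)]) := by
  rcases spell_mem G h with ⟨t, -, rfl⟩ | ⟨-, t, s, -, rfl⟩ | ⟨-, t₁, t₂, s, -, rfl⟩
  · exact Or.inl ⟨t, rfl⟩
  · exact Or.inl ⟨t, rfl⟩
  · refine Or.inr ⟨LDN.emit ι (t₁ :: t₂ :: s), ?_⟩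
    unfold spellSnd
    split
    · exact ⟨LDN.emit ι [t₂], rfl⟩
    · exact ⟨LDN.mid ι (t₂ :: s), rfl⟩

end SpellLemmas

section Semantics

variable (G : ContextFreeGrammar.{0} T)

/-- Words generated by `X` through steps and finishing productions (nonempty words). -/
inductive GenV : G.NT → List T → Prop
  | fin (υ : LinFin G.NT T) (h : FinP G υ) : GenV υ.src (finWord G υ)
  | step (σ : LinStep G.NT T) (h : StepP G σ) {w : List T} (hw : GenV σ.tgt w) :
      GenV σ.src (σ.pre.toList ++ w ++ σ.post.toList)

/-- Words generated from `X` with a step production at the root. -/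
def GenDD (X : G.NT) (w : List T) : Prop :=
  ∃ (σ : LinStep G.NT T) (w' : List T), StepP G σ ∧ σ.src = X ∧ GenV G σ.tgt w' ∧
    w = σ.pre.toList ++ w' ++ σ.post.toList

lemma GenDD.toGenV {X w} (h : GenDD G X w) : GenV G X w := by
  obtain ⟨σ, w', h1, h2, h3, rfl⟩ := h
  subst h2
  exact GenV.step σ h1 h3

/-- Denotation of the nonterminals of `GkG`. -/
def DenO : Option (LDN G.NT T) → List T → Prop
  | none, w => (w = [] ∧ Nul G G.initial) ∨ GenV G G.initial w
  | some (LDN.cont σ), w => GenDD G σ.tgt w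
  | some (LDN.midc σ), w => ∃ w' t₂, σ.post = some t₂ ∧ w = w' ++ [t₂] ∧ GenDD G σ.tgt w'
  | some (LDN.emitL σ), w => ∃ t, σ.pre = some t ∧ w = [t]
  | some (LDN.emitP σ), w => ∃ t, σ.post = some t ∧ w = [t]
  | some (LDN.mid _ s), w => w = s
  | some (LDN.emit _ s), w => ∃ t s', s = t :: s' ∧ w = [t]

/-- Denotation of a right-hand side. -/
def OutDen : List (Symbol T (Option (LDN G.NT T))) → List T → Prop
  | [], w => w = []
  | [Symbol.terminal t], w => w = [t]
  | [Symbol.nonterminal n₁, Symbol.nonterminal n₂], w =>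
      ∃ w₁ w₂, w = w₁ ++ w₂ ∧ DenO G n₁ w₁ ∧ DenO G n₂ w₂
  | _, _ => False

lemma den_addr {X A} (hA : AddrP G X A) {σ : LinStep G.NT T} (hσ : StepP G σ)
    (hs : σ.src = X) {w'} (hw : GenV G σ.tgt w') :
    DenO G A (σ.pre.toList ++ w' ++ σ.post.toList) := by
  rcases hA with ⟨rfl, rfl⟩ | ⟨σ', h1, h2, rfl⟩
  · exact Or.inr (by rw [← hs]; exact GenV.step σ hσ hw)
  · exact ⟨σ, w', hσ, hs.trans h2.symm, hw, rfl⟩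

lemma spell_sound {ι : FIdx G.NT T} {A u} (hden : DenO G A u) :
    ∀ r ∈ spell G ι A u, ∀ w, OutDen G r.output w → DenO G r.input w := by
  induction u generalizing A with
  | nil => intro r hr; simp [spell] at hr
  | cons t₁ rest ih =>
    rcases rest with _ | ⟨t₂, rest⟩
    · intro r hr w hw
      simp only [spell, List.mem_singleton] at hr
      subst hr
      simp only [OutDen] at hw
      subst hw
      exact hden
    rcases rest with _ | ⟨t₃, rest⟩
    · intro r hr w hw
      simp only [spell, List.mem_cons, List.mem_singleton, List.not_mem_nil, or_false] at hr
      rcases hr with rfl | rfl | rfl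
      · simp only [OutDen] at hw
        obtain ⟨w₁, w₂, rfl, h1, h2⟩ := hw
        simp only [DenO] at h1 h2
        obtain ⟨t, s', hts, rfl⟩ := h1
        obtain ⟨t', s'', hts', rfl⟩ := h2
        injection hts with e1 e2
        injection hts' with e3 e4
        subst e1; subst e3
        exact hden
      · simp only [OutDen] at hw
        subst hw
        exact ⟨t₁, [t₂], rfl, rfl⟩
      · simp only [OutDen] at hw
        subst hw
        exact ⟨t₂, [], rfl, rfl⟩
    · intro r hr w hw
      simp only [spell, List.mem_cons] at hr
      rcases hr with rfl | rfl | hr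
      · simp only [OutDen] at hw
        obtain ⟨w₁, w₂, rfl, h1, h2⟩ := hw
        simp only [DenO] at h1 h2
        obtain ⟨t, s', hts, rfl⟩ := h1
        injection hts with e1 e2
        subst e1
        subst h2
        exact hden
      · simp only [OutDen] at hw
        subst hw
        exact ⟨t₁, t₂ :: t₃ :: rest, rfl, rfl⟩
      · exact ih (A := some (LDN.mid ι (t₂ :: t₃ :: rest))) rfl r hr w hw
  
lemma stRules_sound {σ : LinStep G.NT T} {A} (hσ : StepP G σ) (hA : AddrP G σ.src A) :
    ∀ r ∈ stRules G σ A, ∀ w, OutDen G r.output w → DenO G r.input w := by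
  rcases σ with ⟨Xs, pre, tgt, post⟩
  rcases pre with _ | t₁ <;> rcases post with _ | t₂ <;> intro r hr w hw
  · simp [stRules] at hr
  · -- pre = none, post = some t₂
    simp only [stRules, List.mem_cons, List.mem_singleton, List.not_mem_nil, or_false] at hr
    rcases hr with rfl | rfl
    · simp only [OutDen] at hw
      obtain ⟨w₁, w₂, rfl, h1, h2⟩ := hw
      simp only [DenO] at h1 h2
      obtain ⟨t', hpost, rfl⟩ := h2
      injection hpost with e; subst e
      have := den_addr G hA hσ rfl (GenDD.toGenV G h1)
      simpa using this
    · simp only [OutDen] at hw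
      subst hw
      exact ⟨t₂, rfl, rfl⟩
  · -- pre = some t₁, post = none
    simp only [stRules, List.mem_cons, List.mem_singleton, List.not_mem_nil, or_false] at hr
    rcases hr with rfl | rfl
    · simp only [OutDen] at hw
      obtain ⟨w₁, w₂, rfl, h1, h2⟩ := hw
      simp only [DenO] at h1 h2
      obtain ⟨t', hpre, rfl⟩ := h1
      injection hpre with e; subst e
      have := den_addr G hA hσ rfl (GenDD.toGenV G h2)
      simpa using this
    · simp only [OutDen] at hw
      subst hw
      exact ⟨t₁, rfl, rfl⟩
  · -- pre = some t₁, post = some t₂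
    simp only [stRules, List.mem_cons, List.mem_singleton, List.not_mem_nil, or_false] at hr
    rcases hr with rfl | rfl | rfl | rfl
    · simp only [OutDen] at hw
      obtain ⟨w₁, w₂, rfl, h1, h2⟩ := hw
      simp only [DenO] at h1 h2
      obtain ⟨t', hpre, rfl⟩ := h1
      injection hpre with e; subst e
      obtain ⟨w', t₂', hpost, rfl, hdd⟩ := h2
      injection hpost with e; subst e
      have := den_addr G hA hσ rfl (GenDD.toGenV G hdd)
      simpa using this
    · simp only [OutDen] at hw
      obtain ⟨w₁, w₂, rfl, h1, h2⟩ := hw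
      simp only [DenO] at h1 h2
      obtain ⟨t', hpost, rfl⟩ := h2
      injection hpost with e; subst e
      exact ⟨w₁, t₂, rfl, rfl, h1⟩
    · simp only [OutDen] at hw
      subst hw
      exact ⟨t₁, rfl, rfl⟩
    · simp only [OutDen] at hw
      subst hw
      exact ⟨t₂, rfl, rfl⟩

lemma rule_sound : ∀ r ∈ (GkG G).rules, ∀ w, OutDen G r.output w → DenO G r.input w := by
  intro r hr
  rcases (mem_GkG_rules G).mp hr with ⟨h1, rfl⟩ | ⟨σ, A, h1, h2, h3⟩ |
    ⟨σ, υ, A, h1, h2, h3, h4, h5⟩ | ⟨υ, h1, h2, h3⟩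
  · intro w hw
    simp only [OutDen] at hw
    subst hw
    exact Or.inl ⟨rfl, h1⟩
  · exact stRules_sound G h1 h2 r h3
  · refine spell_sound G ?_ r h5
    have hg : GenV G σ.tgt (finWord G υ) := by rw [← h3]; exact GenV.fin υ h2
    have := den_addr G h4 h1 rfl hg
    simpa [sfWord] using this
  · refine spell_sound G ?_ r h3
    exact Or.inr (by rw [← h2]; exact GenV.fin υ h1)

lemma gk_shape : ∀ r ∈ (GkG G).rules,
    (r.output = [] ∧ r.input = none) ∨ (∃ t, r.output = [Symbol.terminal t]) ∨
    (∃ n₁ n₂ : LDN G.NT T, r.output =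
      [Symbol.nonterminal (some n₁), Symbol.nonterminal (some n₂)]) := by
  intro r hr
  rcases (mem_GkG_rules G).mp hr with ⟨h1, rfl⟩ | ⟨σ, A, h1, h2, h3⟩ |
    ⟨σ, υ, A, h1, h2, h3, h4, h5⟩ | ⟨υ, h1, h2, h3⟩
  · exact Or.inl ⟨rfl, rfl⟩
  · rcases σ with ⟨Xs, (_ | t₁), tgt, (_ | t₂)⟩ <;>
      simp only [stRules, List.mem_cons, List.mem_singleton, List.not_mem_nil,
        or_false] at h3
    · rcases h3 with rfl | rfl
      · exact Or.inr (Or.inr ⟨_, _, rfl⟩)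
      · exact Or.inr (Or.inl ⟨_, rfl⟩)
    · rcases h3 with rfl | rfl
      · exact Or.inr (Or.inr ⟨_, _, rfl⟩)
      · exact Or.inr (Or.inl ⟨_, rfl⟩)
    · rcases h3 with rfl | rfl | rfl | rfl
      · exact Or.inr (Or.inr ⟨_, _, rfl⟩)
      · exact Or.inr (Or.inr ⟨_, _, rfl⟩)
      · exact Or.inr (Or.inl ⟨_, rfl⟩)
      · exact Or.inr (Or.inl ⟨_, rfl⟩)
  · rcases spell_sub_shape G h5 with ⟨t, ht⟩ | ⟨n₁, n₂, hn⟩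
    · exact Or.inr (Or.inl ⟨t, ht⟩)
    · exact Or.inr (Or.inr ⟨n₁, n₂, hn⟩)
  · rcases spell_sub_shape G h3 with ⟨t, ht⟩ | ⟨n₁, n₂, hn⟩
    · exact Or.inr (Or.inl ⟨t, ht⟩)
    · exact Or.inr (Or.inr ⟨n₁, n₂, hn⟩)

lemma gk_nil : ∀ r ∈ (GkG G).rules, r.output = [] → r.input = (GkG G).initial := by
  intro r hr ho
  rcases gk_shape G r hr with ⟨h1, h2⟩ | ⟨t, h1⟩ | ⟨n₁, n₂, h1⟩
  · exact h2
  · rw [h1] at ho; simp at ho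
  · rw [h1] at ho; simp at ho

lemma gk_no_none_rhs : ∀ r ∈ (GkG G).rules,
    Symbol.nonterminal (GkG G).initial ∉ r.output := by
  intro r hr
  rcases gk_shape G r hr with ⟨h1, h2⟩ | ⟨t, h1⟩ | ⟨n₁, n₂, h1⟩ <;> rw [h1] <;>
    show Symbol.nonterminal none ∉ _ <;> simp

lemma gk_pos {k : LDN G.NT T} {w : List T}
    (h : (GkG G).Derives [Symbol.nonterminal (some k)] (w.map Symbol.terminal)) :
    w ≠ [] := by
  intro h0
  subst h0
  have : some k = (GkG G).initial :=
    derives_nil_input_initial (gk_nil G) (gk_no_none_rhs G) (by simpa using h)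
  exact Option.some_ne_none k this

lemma gk_sound : ∀ (w : List T) (n : Option (LDN G.NT T)),
    (GkG G).Derives [Symbol.nonterminal n] (w.map Symbol.terminal) → DenO G n w := by
  suffices H : ∀ (N : ℕ) (w : List T), w.length = N → ∀ n,
      (GkG G).Derives [Symbol.nonterminal n] (w.map Symbol.terminal) → DenO G n w from
    fun w n h => H w.length w rfl n h
  intro N
  induction N using Nat.strong_induction_on with
  | _ N ih =>
  intro w hlen n h
  obtain ⟨r, hr, hin, hout⟩ := derives_nt_head_word h
  subst hin
  rcases gk_shape G r hr with ⟨h1, -⟩ | ⟨t, h1⟩ | ⟨n₁, n₂, h1⟩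
  · rw [h1] at hout
    have hw0 : w = [] := by
      have := derives_of_terminals (w := []) (g := GkG G) (by simpa using hout)
      cases w
      · rfl
      · simp at this
    refine rule_sound G r hr w ?_
    rw [h1]
    simpa [OutDen] using hw0
  · rw [h1] at hout
    have hwt : w = [t] := by
      have := derives_of_terminals (w := [t]) (g := GkG G) (by simpa using hout)
      exact (map_terminal_inj this.symm).symm
    refine rule_sound G r hr w ?_
    rw [h1]
    simpa [OutDen] using hwt
  · rw [h1] at hout
    obtain ⟨w₁, w₂, rfl, d1, d2⟩ := derives_nt_split hout
    have p1 : w₁ ≠ [] := gk_pos G d1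
    have p2 : w₂ ≠ [] := gk_pos G d2
    simp only [List.length_append] at hlen
    have den1 := ih w₁.length (by
      have : 1 ≤ w₂.length := List.length_pos_iff.mpr p2
      omega) w₁ rfl (some n₁) d1
    have den2 := ih w₂.length (by
      have : 1 ≤ w₁.length := List.length_pos_iff.mpr p1
      omega) w₂ rfl (some n₂) d2
    refine rule_sound G r hr _ ?_
    rw [h1]
    exact ⟨w₁, w₂, rfl, den1, den2⟩

end Semantics


section Completeness

variable (G : ContextFreeGrammar.{0} T)

lemma gk_prod {B : Option (LDN G.NT T)} {out}
    (h : (⟨B, out⟩ : ContextFreeRule T (Option (LDN G.NT T))) ∈ (GkG G).rules) :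
    (GkG G).Produces [Symbol.nonterminal B] out :=
  ⟨⟨B, out⟩, h, ContextFreeRule.Rewrites.input_output⟩

lemma spell_derives {ι : FIdx G.NT T} {A u}
    (hsub : ∀ r ∈ spell G ι A u, r ∈ (GkG G).rules) (hne : u ≠ []) :
    (GkG G).Derives [Symbol.nonterminal A] (u.map Symbol.terminal) := by
  induction u generalizing A with
  | nil => exact absurd rfl hne
  | cons t₁ rest ih =>
    rcases rest with _ | ⟨t₂, rest⟩
    · exact (gk_prod G (hsub _ (by simp [spell]))).single
    rcases rest with _ | ⟨t₃, rest⟩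
    · have hb : (⟨A, [Symbol.nonterminal (some (LDN.emit ι [t₁, t₂])),
          Symbol.nonterminal (some (LDN.emit ι [t₂]))]⟩ :
          ContextFreeRule T (Option (LDN G.NT T))) ∈ (GkG G).rules := hsub _ (by simp [spell])
      have he1 : (⟨some (LDN.emit ι [t₁, t₂]), [Symbol.terminal t₁]⟩ :
          ContextFreeRule T (Option (LDN G.NT T))) ∈ (GkG G).rules := hsub _ (by simp [spell])
      have he2 : (⟨some (LDN.emit ι [t₂]), [Symbol.terminal t₂]⟩ :
          ContextFreeRule T (Option (LDN G.NT T))) ∈ (GkG G).rules := hsub _ (by simp [spell])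
      refine (gk_prod G hb).trans_derives ?_
      have d1 := (gk_prod G he1).append_right [Symbol.nonterminal (some (LDN.emit ι [t₂]))]
      refine (show (GkG G).Produces _ _ from by simpa using d1).trans_derives ?_
      have d2 := (gk_prod G he2).append_left [Symbol.terminal t₁]
      exact (show (GkG G).Produces _ _ from by simpa using d2).single
    · have hb : (⟨A, [Symbol.nonterminal (some (LDN.emit ι (t₁ :: t₂ :: t₃ :: rest))),
          Symbol.nonterminal (some (LDN.mid ι (t₂ :: t₃ :: rest)))]⟩ :
          ContextFreeRule T (Option (LDN G.NT T))) ∈ (GkG G).rules := hsub _ (by simp [spell])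
      have he : (⟨some (LDN.emit ι (t₁ :: t₂ :: t₃ :: rest)), [Symbol.terminal t₁]⟩ :
          ContextFreeRule T (Option (LDN G.NT T))) ∈ (GkG G).rules := hsub _ (by simp [spell])
      have hrec := ih (A := some (LDN.mid ι (t₂ :: t₃ :: rest)))
        (fun r hr => hsub r (List.mem_cons_of_mem _ (List.mem_cons_of_mem _ hr)))
        (by simp)
      refine (gk_prod G hb).trans_derives ?_
      have d1 := (gk_prod G he).append_right
        [Symbol.nonterminal (some (LDN.mid ι (t₂ :: t₃ :: rest)))]
      refine (show (GkG G).Produces _ _ from by simpa using d1).trans_derives ?_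
      have d2 := hrec.append_left [Symbol.terminal t₁]
      simpa using d2

lemma st_derives {σ : LinStep G.NT T} {A} (hσ : StepP G σ) (hA : AddrP G σ.src A) :
    (GkG G).Derives [Symbol.nonterminal A]
      ((σ.pre.toList.map Symbol.terminal) ++ [Symbol.nonterminal (some (LDN.cont σ))] ++
        (σ.post.toList.map Symbol.terminal)) := by
  have hsub : ∀ r ∈ stRules G σ A, r ∈ (GkG G).rules := fun r hr =>
    (mem_GkG_rules G).mpr (Or.inr (Or.inl ⟨σ, A, hσ, hA, hr⟩))
  have hleg := hσ.2
  rcases σ with ⟨Xs, pre, tgt, post⟩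
  rcases pre with _ | t₁ <;> rcases post with _ | t₂
  · exfalso; simpa using hleg
  · have hb := gk_prod G (hsub (⟨A,
        [Symbol.nonterminal (some (LDN.cont ⟨Xs, none, tgt, some t₂⟩)),
         Symbol.nonterminal (some (LDN.emitP ⟨Xs, none, tgt, some t₂⟩))]⟩ :
        ContextFreeRule T (Option (LDN G.NT T))) (by simp [stRules]))
    refine hb.trans_derives ?_
    have he := gk_prod G (hsub (⟨some (LDN.emitP ⟨Xs, none, tgt, some t₂⟩),
        [Symbol.terminal t₂]⟩ : ContextFreeRule T (Option (LDN G.NT T)))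
        (by simp [stRules]))
    have d := he.append_left
      [Symbol.nonterminal (some (LDN.cont (⟨Xs, none, tgt, some t₂⟩ : LinStep G.NT T)))]
    exact (show (GkG G).Produces _ _ from by simpa using d).single
  · have hb := gk_prod G (hsub (⟨A,
        [Symbol.nonterminal (some (LDN.emitL ⟨Xs, some t₁, tgt, none⟩)),
         Symbol.nonterminal (some (LDN.cont ⟨Xs, some t₁, tgt, none⟩))]⟩ :
        ContextFreeRule T (Option (LDN G.NT T))) (by simp [stRules]))
    refine hb.trans_derives ?_
    have he := gk_prod G (hsub (⟨some (LDN.emitL ⟨Xs, some t₁, tgt, none⟩),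
        [Symbol.terminal t₁]⟩ : ContextFreeRule T (Option (LDN G.NT T)))
        (by simp [stRules]))
    have d := he.append_right
      [Symbol.nonterminal (some (LDN.cont (⟨Xs, some t₁, tgt, none⟩ : LinStep G.NT T)))]
    exact (show (GkG G).Produces _ _ from by simpa using d).single
  · have hb := gk_prod G (hsub (⟨A,
        [Symbol.nonterminal (some (LDN.emitL ⟨Xs, some t₁, tgt, some t₂⟩)),
         Symbol.nonterminal (some (LDN.midc ⟨Xs, some t₁, tgt, some t₂⟩))]⟩ :
        ContextFreeRule T (Option (LDN G.NT T))) (by simp [stRules]))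
    refine hb.trans_derives ?_
    have hm := gk_prod G (hsub (⟨some (LDN.midc ⟨Xs, some t₁, tgt, some t₂⟩),
        [Symbol.nonterminal (some (LDN.cont ⟨Xs, some t₁, tgt, some t₂⟩)),
         Symbol.nonterminal (some (LDN.emitP ⟨Xs, some t₁, tgt, some t₂⟩))]⟩ :
        ContextFreeRule T (Option (LDN G.NT T))) (by simp [stRules]))
    have he1 := gk_prod G (hsub (⟨some (LDN.emitL ⟨Xs, some t₁, tgt, some t₂⟩),
        [Symbol.terminal t₁]⟩ : ContextFreeRule T (Option (LDN G.NT T))) (by simp [stRules]))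
    have he2 := gk_prod G (hsub (⟨some (LDN.emitP ⟨Xs, some t₁, tgt, some t₂⟩),
        [Symbol.terminal t₂]⟩ : ContextFreeRule T (Option (LDN G.NT T))) (by simp [stRules]))
    have d1 := he1.append_right
      [Symbol.nonterminal (some (LDN.midc (⟨Xs, some t₁, tgt, some t₂⟩ : LinStep G.NT T)))]
    refine (show (GkG G).Produces _ _ from by simpa using d1).trans_derives ?_
    have d2 := (hm.append_left [Symbol.terminal t₁])
    refine (show (GkG G).Produces _ _ from by simpa using d2).trans_derives ?_
    have d3 := (he2.append_left ([Symbol.terminal t₁] ++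
      [Symbol.nonterminal (some (LDN.cont (⟨Xs, some t₁, tgt, some t₂⟩ : LinStep G.NT T)))]))
    exact (show (GkG G).Produces _ _ from by simpa using d3).single

lemma genv_derives : ∀ {X w}, GenV G X w → ∀ (σ : LinStep G.NT T), StepP G σ →
    σ.tgt = X → ∀ A, AddrP G σ.src A →
    (GkG G).Derives [Symbol.nonterminal A]
      ((σ.pre.toList ++ w ++ σ.post.toList).map Symbol.terminal) := by
  intro X w h
  induction h with
  | fin υ hυ =>
    intro σ hσ htgt A hA
    have hsub : ∀ r ∈ spell G (Sum.inl (σ, υ)) A (sfWord G σ υ), r ∈ (GkG G).rules :=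
      fun r hr => (mem_GkG_rules G).mpr
        (Or.inr (Or.inr (Or.inl ⟨σ, υ, A, hσ, hυ, htgt.symm, hA, hr⟩)))
    have := spell_derives G hsub (by simp [sfWord, finWord])
    simpa [sfWord] using this
  | step σ₂ hσ₂ hw ih =>
    intro σ hσ htgt A hA
    have h1 := st_derives G hσ hA
    have h2 := ih σ₂ hσ₂ rfl (some (LDN.cont σ)) (Or.inr ⟨σ, hσ, htgt, rfl⟩)
    have h3 := (h2.append_left (σ.pre.toList.map Symbol.terminal)).append_right
      (σ.post.toList.map Symbol.terminal)
    refine h1.trans ?_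
    simpa using h3

lemma genv_top {X w} (h : GenV G X w) (hX : X = G.initial) :
    (GkG G).Derives [Symbol.nonterminal none] (w.map Symbol.terminal) := by
  cases h with
  | fin υ hυ =>
    have hsub : ∀ r ∈ spell G (Sum.inr υ) none (finWord G υ), r ∈ (GkG G).rules :=
      fun r hr => (mem_GkG_rules G).mpr (Or.inr (Or.inr (Or.inr ⟨υ, hυ, hX, hr⟩)))
    exact spell_derives G hsub (by simp [finWord])
  | step σ hσ hw =>
    exact genv_derives G hw σ hσ rfl none (Or.inl ⟨rfl, hX⟩)

lemma gk_language_iff (w : List T) : w ∈ (GkG G).language ↔ DenO G none w := by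
  constructor
  · intro h
    exact gk_sound G w none h
  · intro h
    rcases h with ⟨rfl, hnul⟩ | h
    · have : (⟨none, []⟩ : ContextFreeRule T (Option (LDN G.NT T))) ∈ (GkG G).rules :=
        (mem_GkG_rules G).mpr (Or.inl ⟨hnul, rfl⟩)
      exact (show (GkG G).Derives _ _ from by simpa using (gk_prod G this).single)
    · exact genv_top G h rfl

end Completeness

section GSide

variable (G : ContextFreeGrammar.{0} T)

/-- Direct inductive characterization of the words derivable in a linear grammar. -/
inductive GenG : G.NT → List T → Prop
  | nul {X} (h : (⟨X, []⟩ : ContextFreeRule T G.NT) ∈ G.rules) : GenG X []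
  | term {X t} (h : (⟨X, [Symbol.terminal t]⟩ : ContextFreeRule T G.NT) ∈ G.rules) :
      GenG X [t]
  | stepL {X t Y w} (h : (⟨X, [Symbol.terminal t, Symbol.nonterminal Y]⟩ :
      ContextFreeRule T G.NT) ∈ G.rules) (hw : GenG Y w) : GenG X (t :: w)
  | stepR {X Y t w} (h : (⟨X, [Symbol.nonterminal Y, Symbol.terminal t]⟩ :
      ContextFreeRule T G.NT) ∈ G.rules) (hw : GenG Y w) : GenG X (w ++ [t])
  | stepB {X t₁ Y t₂ w} (h : (⟨X, [Symbol.terminal t₁, Symbol.nonterminal Y,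
      Symbol.terminal t₂]⟩ : ContextFreeRule T G.NT) ∈ G.rules) (hw : GenG Y w) :
      GenG X (t₁ :: (w ++ [t₂]))

lemma genG_derives {X w} (h : GenG G X w) :
    G.Derives [Symbol.nonterminal X] (w.map Symbol.terminal) := by
  induction h with
  | nul h =>
    exact (show G.Produces _ _ from
      ⟨_, h, ContextFreeRule.Rewrites.input_output⟩).single
  | term h =>
    exact (show G.Produces _ _ from
      ⟨_, h, ContextFreeRule.Rewrites.input_output⟩).single
  | @stepL X t Y w h hw ih =>
    refine (show G.Produces _ _ from
      ⟨_, h, ContextFreeRule.Rewrites.input_output⟩).trans_derives ?_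
    have := ih.append_left [Symbol.terminal t]
    simpa using this
  | @stepR X Y t w h hw ih =>
    refine (show G.Produces _ _ from
      ⟨_, h, ContextFreeRule.Rewrites.input_output⟩).trans_derives ?_
    have := ih.append_right [Symbol.terminal t]
    simpa using this
  | @stepB X t₁ Y t₂ w h hw ih =>
    refine (show G.Produces _ _ from
      ⟨_, h, ContextFreeRule.Rewrites.input_output⟩).trans_derives ?_
    have := (ih.append_left [Symbol.terminal t₁]).append_right [Symbol.terminal t₂]
    simpa using this

lemma derives_genG (hlin : IsLinear G) : ∀ (w : List T) (X : G.NT),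
    G.Derives [Symbol.nonterminal X] (w.map Symbol.terminal) → GenG G X w := by
  suffices H : ∀ (N : ℕ) (w : List T), w.length = N → ∀ X,
      G.Derives [Symbol.nonterminal X] (w.map Symbol.terminal) → GenG G X w from
    fun w X h => H w.length w rfl X h
  intro N
  induction N using Nat.strong_induction_on with
  | _ N ih =>
  intro w hlen X h
  obtain ⟨r, hr, hin, hout⟩ := derives_nt_head_word h
  have hXr : ∀ o, r.output = o → (⟨X, o⟩ : ContextFreeRule T G.NT) ∈ G.rules := by
    intro o ho
    rcases r with ⟨ri, ro⟩
    simp only at hin ho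
    subst hin; subst ho
    exact hr
  rcases hlin r hr with h0 | ⟨t, h0⟩ | ⟨t, Y, h0⟩ | ⟨t, Y, h0⟩ | ⟨t₁, t₂, Y, h0⟩
  · rw [h0] at hout
    have hw0 : w = [] := by
      have := derives_of_terminals (w := []) (g := G) (by simpa using hout)
      cases w
      · rfl
      · simp at this
    subst hw0
    exact GenG.nul (hXr [] h0)
  · rw [h0] at hout
    have hwt : w = [t] := by
      have := derives_of_terminals (w := [t]) (g := G) (by simpa using hout)
      exact (map_terminal_inj this.symm).symm
    subst hwt
    exact GenG.term (hXr _ h0)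
  · rw [h0] at hout
    obtain ⟨w', rfl, hd⟩ := derives_terminal_cons hout
    have := ih w'.length (by simp at hlen; omega) w' rfl Y hd
    exact GenG.stepL (hXr _ h0) this
  · rw [h0] at hout
    obtain ⟨w', rfl, hd⟩ := derives_terminal_concat (α := [Symbol.nonterminal Y])
      (by simpa using hout)
    have := ih w'.length (by simp at hlen; omega) w' rfl Y hd
    exact GenG.stepR (hXr _ h0) this
  · rw [h0] at hout
    obtain ⟨w₁, rfl, hd1⟩ := derives_terminal_cons hout
    obtain ⟨w₂, rfl, hd2⟩ := derives_terminal_concat (α := [Symbol.nonterminal Y])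
      (by simpa using hd1)
    have := ih w₂.length (by simp at hlen; omega) w₂ rfl Y hd2
    exact GenG.stepB (hXr _ h0) this

lemma genG_iff_genV {X : G.NT} {w : List T} :
    GenG G X w ↔ (GenV G X w ∨ (w = [] ∧ Nul G X)) := by
  constructor
  · intro h
    induction h with
    | nul h => exact Or.inr ⟨rfl, h⟩
    | term h =>
      refine Or.inl ?_
      have := GenV.fin (G := G) ⟨_, _, none⟩ (show FinP G ⟨_, _, none⟩ from Or.inl h)
      simpa [finWord] using this
    | @stepL X t Y w h hw ihw =>
      refine Or.inl ?_
      rcases ihw with hv | ⟨rfl, hnul⟩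
      · have hst : StepP G ⟨X, some t, Y, none⟩ := by
          refine ⟨?_, by simp⟩
          simpa [stepOut] using h
        have := GenV.step (G := G) ⟨X, some t, Y, none⟩ hst hv
        simpa using this
      · have := GenV.fin (G := G) ⟨X, t, none⟩
          (show FinP G ⟨X, t, none⟩ from Or.inr (Or.inl ⟨Y, h, hnul⟩))
        simpa [finWord] using this
    | @stepR X Y t w h hw ihw =>
      refine Or.inl ?_
      rcases ihw with hv | ⟨rfl, hnul⟩
      · have hst : StepP G ⟨X, none, Y, some t⟩ := by
          refine ⟨?_, by simp⟩
          simpa [stepOut] using h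
        have := GenV.step (G := G) ⟨X, none, Y, some t⟩ hst hv
        simpa using this
      · have := GenV.fin (G := G) ⟨X, t, none⟩
          (show FinP G ⟨X, t, none⟩ from Or.inr (Or.inr ⟨Y, h, hnul⟩))
        simpa [finWord] using this
    | @stepB X t₁ Y t₂ w h hw ihw =>
      refine Or.inl ?_
      rcases ihw with hv | ⟨rfl, hnul⟩
      · have hst : StepP G ⟨X, some t₁, Y, some t₂⟩ := by
          refine ⟨?_, by simp⟩
          simpa [stepOut] using h
        have := GenV.step (G := G) ⟨X, some t₁, Y, some t₂⟩ hst hv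
        simpa using this
      · have := GenV.fin (G := G) ⟨X, t₁, some t₂⟩
          (show FinP G ⟨X, t₁, some t₂⟩ from ⟨Y, h, hnul⟩)
        simpa [finWord] using this
  · rintro (hv | ⟨rfl, hnul⟩)
    · induction hv with
      | fin υ hυ =>
        rcases υ with ⟨Xs, t1, (_ | t2)⟩
        · rcases hυ with hh | ⟨Y, hh, hY⟩ | ⟨Y, hh, hY⟩
          · exact GenG.term hh
          · have := GenG.stepL (G := G) hh (GenG.nul hY)
            simpa [finWord] using this
          · have := GenG.stepR (G := G) hh (GenG.nul hY)
            simpa [finWord] using this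
        · obtain ⟨Y, hh, hY⟩ := hυ
          have := GenG.stepB (G := G) hh (GenG.nul hY)
          simpa [finWord] using this
      | step σ hσ hw ihw =>
        have hleg := hσ.2
        have hmem := hσ.1
        rcases σ with ⟨Xs, pre, tgt, post⟩
        rcases pre with _ | t₁ <;> rcases post with _ | t₂
        · exfalso; simpa using hleg
        · have := GenG.stepR (G := G) (by simpa [stepOut] using hmem) ihw
          simpa using this
        · have := GenG.stepL (G := G) (by simpa [stepOut] using hmem) ihw
          simpa using this
        · have := GenG.stepB (G := G) (by simpa [stepOut] using hmem) ihw
          simpa using this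
    · exact GenG.nul hnul

lemma g_language_iff (hlin : IsLinear G) (w : List T) :
    w ∈ G.language ↔ DenO G none w := by
  rw [ContextFreeGrammar.mem_language_iff]
  constructor
  · intro h
    have := (genG_iff_genV G).mp (derives_genG G hlin w G.initial h)
    rcases this with hv | ⟨rfl, hnul⟩
    · exact Or.inr hv
    · exact Or.inl ⟨rfl, hnul⟩
  · intro h
    rcases h with ⟨rfl, hnul⟩ | hv
    · exact genG_derives G (GenG.nul hnul)
    · exact genG_derives G ((genG_iff_genV G).mpr (Or.inl hv))

lemma dir1_language (hlin : IsLinear G) : G.language = (GkG G).language := by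
  ext w
  rw [g_language_iff G hlin w, gk_language_iff G w]

end GSide

section DyckConditions

variable (G : ContextFreeGrammar.{0} T)

lemma suffix_eq_of_length {α : Type*} {l₁ l₂ u : List α} (h1 : l₁ <:+ u) (h2 : l₂ <:+ u)
    (h : l₁.length = l₂.length) : l₁ = l₂ := by
  obtain ⟨p₁, e₁⟩ := h1
  obtain ⟨p₂, e₂⟩ := h2
  exact (List.append_inj' (e₁.trans e₂.symm) h).2

/-- The context data of a spelling family. -/
def SpellCtx (ι : FIdx G.NT T) (A : Option (LDN G.NT T)) (u : List T) : Prop :=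
  (∃ σ υ, ι = Sum.inl (σ, υ) ∧ StepP G σ ∧ FinP G υ ∧ υ.src = σ.tgt ∧ AddrP G σ.src A ∧
    u = sfWord G σ υ) ∨
  (∃ υ, ι = Sum.inr υ ∧ FinP G υ ∧ υ.src = G.initial ∧ A = none ∧ u = finWord G υ)

lemma spellCtx_word {ι A u A' u'} (h : SpellCtx G ι A u) (h' : SpellCtx G ι A' u') :
    u = u' := by
  rcases h with ⟨σ, υ, rfl, -, -, -, -, rfl⟩ | ⟨υ, rfl, -, -, -, rfl⟩ <;>
    rcases h' with ⟨σ', υ', he, -, -, -, -, rfl⟩ | ⟨υ', he, -, -, -, rfl⟩ <;> simp_all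

lemma spellCtx_A_shape {ι A u} (h : SpellCtx G ι A u) :
    A = none ∨ ∃ σ', A = some (LDN.cont σ') := by
  rcases h with ⟨σ, υ, -, -, -, -, hA, -⟩ | ⟨υ, -, -, -, rfl, -⟩
  · rcases hA with ⟨rfl, -⟩ | ⟨σ', -, -, rfl⟩
    · exact Or.inl rfl
    · exact Or.inr ⟨σ', rfl⟩
  · exact Or.inl rfl

lemma sfWord_two_le {σ : LinStep G.NT T} (hσ : StepP G σ) (υ : LinFin G.NT T) :
    2 ≤ (sfWord G σ υ).length := by
  have hleg := hσ.2
  rcases σ with ⟨Xs, (_ | t₁), tgt, (_ | t₂)⟩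
  · exfalso; simpa using hleg
  all_goals simp [sfWord, finWord]

lemma gk_term_descr {r} (hr : r ∈ (GkG G).rules) {a : T}
    (ho : r.output = [Symbol.terminal a]) (hni : r.input ≠ none) :
    (∃ σ A, StepP G σ ∧ AddrP G σ.src A ∧ σ.pre = some a ∧
        r = ⟨some (LDN.emitL σ), [Symbol.terminal a]⟩)
  ∨ (∃ σ A, StepP G σ ∧ AddrP G σ.src A ∧ σ.post = some a ∧
        r = ⟨some (LDN.emitP σ), [Symbol.terminal a]⟩)
  ∨ (∃ ι A u s, SpellCtx G ι A u ∧ (a :: s) <:+ u ∧ 2 ≤ u.length ∧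
        r = ⟨some (LDN.emit ι (a :: s)), [Symbol.terminal a]⟩) := by
  rcases (mem_GkG_rules G).mp hr with ⟨h1, rfl⟩ | ⟨σ, A, h1, h2, h3⟩ |
    ⟨σ, υ, A, h1, h2, h3, h4, h5⟩ | ⟨υ, h1, h2, h3⟩
  · simp at ho
  · rcases σ with ⟨Xs, (_ | t₁), tgt, (_ | t₂)⟩ <;>
      simp only [stRules, List.mem_cons, List.mem_singleton, List.not_mem_nil,
        or_false] at h3
    · rcases h3 with rfl | rfl
      · simp at ho
      · simp only [List.cons.injEq, Symbol.terminal.injEq, and_true] at ho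
        subst ho
        exact Or.inr (Or.inl ⟨_, A, h1, h2, rfl, rfl⟩)
    · rcases h3 with rfl | rfl
      · simp at ho
      · simp only [List.cons.injEq, Symbol.terminal.injEq, and_true] at ho
        subst ho
        exact Or.inl ⟨_, A, h1, h2, rfl, rfl⟩
    · rcases h3 with rfl | rfl | rfl | rfl
      · simp at ho
      · simp at ho
      · simp only [List.cons.injEq, Symbol.terminal.injEq, and_true] at ho
        subst ho
        exact Or.inl ⟨_, A, h1, h2, rfl, rfl⟩
      · simp only [List.cons.injEq, Symbol.terminal.injEq, and_true] at ho
        subst ho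
        exact Or.inr (Or.inl ⟨_, A, h1, h2, rfl, rfl⟩)
  · have hctx : SpellCtx G (Sum.inl (σ, υ)) A (sfWord G σ υ) :=
      Or.inl ⟨σ, υ, rfl, h1, h2, h3, h4, rfl⟩
    rcases spell_mem G h5 with ⟨t, hu, rfl⟩ | ⟨hlen2, t, s, hsuf, rfl⟩ |
      ⟨hlen2, t₁, t₂, s, hsuf, rfl⟩
    · exfalso
      have := sfWord_two_le G h1 υ
      rw [hu] at this
      simp at this
    · simp only [List.cons.injEq, Symbol.terminal.injEq, and_true] at ho
      subst ho
      exact Or.inr (Or.inr ⟨_, A, _, s, hctx, hsuf, hlen2, rfl⟩)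
    · simp at ho
  · have hctx : SpellCtx G (Sum.inr υ) none (finWord G υ) :=
      Or.inr ⟨υ, rfl, h1, h2, rfl, rfl⟩
    rcases spell_mem G h3 with ⟨t, hu, rfl⟩ | ⟨hlen2, t, s, hsuf, rfl⟩ |
      ⟨hlen2, t₁, t₂, s, hsuf, rfl⟩
    · exact absurd rfl hni
    · simp only [List.cons.injEq, Symbol.terminal.injEq, and_true] at ho
      subst ho
      exact Or.inr (Or.inr ⟨_, none, _, s, hctx, hsuf, hlen2, rfl⟩)
    · simp at ho

lemma gk_bin_descr {r} (hr : r ∈ (GkG G).rules) {B C : LDN G.NT T}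
    (ho : r.output = [Symbol.nonterminal (some B), Symbol.nonterminal (some C)]) :
    (∃ σ A t, StepP G σ ∧ AddrP G σ.src A ∧ σ.pre = some t ∧ σ.post = none ∧
        r.input = A ∧ B = LDN.emitL σ ∧ C = LDN.cont σ)
  ∨ (∃ σ A t, StepP G σ ∧ AddrP G σ.src A ∧ σ.pre = none ∧ σ.post = some t ∧
        r.input = A ∧ B = LDN.cont σ ∧ C = LDN.emitP σ)
  ∨ (∃ σ A t₁ t₂, StepP G σ ∧ AddrP G σ.src A ∧ σ.pre = some t₁ ∧ σ.post = some t₂ ∧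
        r.input = A ∧ B = LDN.emitL σ ∧ C = LDN.midc σ)
  ∨ (∃ σ A t₁ t₂, StepP G σ ∧ AddrP G σ.src A ∧ σ.pre = some t₁ ∧ σ.post = some t₂ ∧
        r.input = some (LDN.midc σ) ∧ B = LDN.cont σ ∧ C = LDN.emitP σ)
  ∨ (∃ ι A u t₁ t₂ s, SpellCtx G ι A u ∧ (t₁ :: t₂ :: s) <:+ u ∧
        r.input = spellLhs ι A u (t₁ :: t₂ :: s) ∧ B = LDN.emit ι (t₁ :: t₂ :: s) ∧
        some C = spellSnd ι t₂ s) := by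
  rcases (mem_GkG_rules G).mp hr with ⟨h1, rfl⟩ | ⟨σ, A, h1, h2, h3⟩ |
    ⟨σ, υ, A, h1, h2, h3, h4, h5⟩ | ⟨υ, h1, h2, h3⟩
  · simp at ho
  · rcases σ with ⟨Xs, (_ | t₁), tgt, (_ | t₂)⟩ <;>
      simp only [stRules, List.mem_cons, List.mem_singleton, List.not_mem_nil,
        or_false] at h3
    · rcases h3 with rfl | rfl
      · simp only [List.cons.injEq, Symbol.nonterminal.injEq, Option.some.injEq,
          and_true] at ho
        obtain ⟨hB, hC⟩ := ho
        exact Or.inr (Or.inl ⟨_, A, t₂, h1, h2, rfl, rfl, rfl, hB.symm, hC.symm⟩)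
      · simp at ho
    · rcases h3 with rfl | rfl
      · simp only [List.cons.injEq, Symbol.nonterminal.injEq, Option.some.injEq,
          and_true] at ho
        obtain ⟨hB, hC⟩ := ho
        exact Or.inl ⟨_, A, t₁, h1, h2, rfl, rfl, rfl, hB.symm, hC.symm⟩
      · simp at ho
    · rcases h3 with rfl | rfl | rfl | rfl
      · simp only [List.cons.injEq, Symbol.nonterminal.injEq, Option.some.injEq,
          and_true] at ho
        obtain ⟨hB, hC⟩ := ho
        exact Or.inr (Or.inr (Or.inl ⟨_, A, t₁, t₂, h1, h2, rfl, rfl, rfl,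
          hB.symm, hC.symm⟩))
      · simp only [List.cons.injEq, Symbol.nonterminal.injEq, Option.some.injEq,
          and_true] at ho
        obtain ⟨hB, hC⟩ := ho
        exact Or.inr (Or.inr (Or.inr (Or.inl ⟨_, A, t₁, t₂, h1, h2, rfl, rfl, rfl,
          hB.symm, hC.symm⟩)))
      · simp at ho
      · simp at ho
  · have hctx : SpellCtx G (Sum.inl (σ, υ)) A (sfWord G σ υ) :=
      Or.inl ⟨σ, υ, rfl, h1, h2, h3, h4, rfl⟩
    rcases spell_mem G h5 with ⟨t, hu, rfl⟩ | ⟨hlen2, t, s, hsuf, rfl⟩ |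
      ⟨hlen2, t₁, t₂, s, hsuf, rfl⟩
    · simp at ho
    · simp at ho
    · simp only [List.cons.injEq, Symbol.nonterminal.injEq, Option.some.injEq,
        and_true] at ho
      obtain ⟨hB, hC⟩ := ho
      exact Or.inr (Or.inr (Or.inr (Or.inr ⟨_, A, _, t₁, t₂, s, hctx, hsuf, rfl,
        hB.symm, hC.symm⟩)))
  · have hctx : SpellCtx G (Sum.inr υ) none (finWord G υ) :=
      Or.inr ⟨υ, rfl, h1, h2, rfl, rfl⟩
    rcases spell_mem G h3 with ⟨t, hu, rfl⟩ | ⟨hlen2, t, s, hsuf, rfl⟩ |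
      ⟨hlen2, t₁, t₂, s, hsuf, rfl⟩
    · simp at ho
    · simp at ho
    · simp only [List.cons.injEq, Symbol.nonterminal.injEq, Option.some.injEq,
        and_true] at ho
      obtain ⟨hB, hC⟩ := ho
      exact Or.inr (Or.inr (Or.inr (Or.inr ⟨_, none, _, t₁, t₂, s, hctx, hsuf, rfl,
        hB.symm, hC.symm⟩)))

lemma bin_input_shape {r} (hr : r ∈ (GkG G).rules) {B C : LDN G.NT T}
    (ho : r.output = [Symbol.nonterminal (some B), Symbol.nonterminal (some C)]) :
    r.input = none ∨ (∃ σ, r.input = some (LDN.cont σ)) ∨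
    (∃ σ, r.input = some (LDN.midc σ)) ∨ (∃ ι v, r.input = some (LDN.mid ι v)) := by
  rcases gk_bin_descr G hr ho with
    ⟨σ, A, t, -, hA, -, -, hin, -, -⟩ | ⟨σ, A, t, -, hA, -, -, hin, -, -⟩ |
    ⟨σ, A, t₁, t₂, -, hA, -, -, hin, -, -⟩ | ⟨σ, A, t₁, t₂, -, -, -, -, hin, -, -⟩ |
    ⟨ι, A, u, t₁, t₂, s, hctx, -, hin, -, -⟩
  · rcases hA with ⟨rfl, -⟩ | ⟨σ', -, -, rfl⟩
    · exact Or.inl hin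
    · exact Or.inr (Or.inl ⟨σ', hin⟩)
  · rcases hA with ⟨rfl, -⟩ | ⟨σ', -, -, rfl⟩
    · exact Or.inl hin
    · exact Or.inr (Or.inl ⟨σ', hin⟩)
  · rcases hA with ⟨rfl, -⟩ | ⟨σ', -, -, rfl⟩
    · exact Or.inl hin
    · exact Or.inr (Or.inl ⟨σ', hin⟩)
  · exact Or.inr (Or.inr (Or.inl ⟨σ, hin⟩))
  · by_cases hv : (t₁ :: t₂ :: s) = u
    · rw [spellLhs, if_pos hv] at hin
      rcases spellCtx_A_shape G hctx with rfl | ⟨σ', rfl⟩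
      · exact Or.inl hin
      · exact Or.inr (Or.inl ⟨σ', hin⟩)
    · rw [spellLhs, if_neg hv] at hin
      exact Or.inr (Or.inr (Or.inr ⟨ι, _, hin⟩))

end DyckConditions

section DyckMain

variable (G : ContextFreeGrammar.{0} T)

open Classical in
/-- The word of a spelling context. -/
noncomputable def uOf : FIdx G.NT T → List T
  | Sum.inl (σ, υ) => sfWord G σ υ
  | Sum.inr υ => finWord G υ

lemma spellCtx_uOf {ι A u} (h : SpellCtx G ι A u) : u = uOf G ι := by
  rcases h with ⟨σ, υ, rfl, -, -, -, -, rfl⟩ | ⟨υ, rfl, -, -, -, rfl⟩ <;> simp [uOf]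

lemma spellSnd_cases {ι : FIdx G.NT T} {m : LDN G.NT T} {t₂ s}
    (h : some m = spellSnd ι t₂ s) :
    (s = [] ∧ m = LDN.emit ι [t₂]) ∨ (s ≠ [] ∧ m = LDN.mid ι (t₂ :: s)) := by
  by_cases hs : s = []
  · rw [spellSnd, if_pos hs] at h
    exact Or.inl ⟨hs, Option.some_injective _ h⟩
  · rw [spellSnd, if_neg hs] at h
    exact Or.inr ⟨hs, Option.some_injective _ h⟩

lemma drop_suffix_eq {α : Type*} {l u : List α} (h : l <:+ u) :
    u.drop (u.length - l.length) = l := by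
  have hle := h.length_le
  refine suffix_eq_of_length (List.drop_suffix _ _) h ?_
  simp only [List.length_drop]
  omega

open Classical in
/-- The right partner of a left bracket. -/
noncomputable def partnerR : LDN G.NT T → Option (LDN G.NT T)
  | LDN.emitL σ => if σ.post = none then some (LDN.cont σ) else some (LDN.midc σ)
  | LDN.cont σ => some (LDN.emitP σ)
  | LDN.emit ι (_ :: t₂ :: s) => spellSnd ι t₂ s
  | _ => none

open Classical in
/-- The left partner of a right bracket. -/
noncomputable def partnerL : LDN G.NT T → Option (LDN G.NT T)
  | LDN.cont σ => some (LDN.emitL σ)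
  | LDN.emitP σ => some (LDN.cont σ)
  | LDN.midc σ => some (LDN.emitL σ)
  | LDN.emit ι l => some (LDN.emit ι ((uOf G ι).drop ((uOf G ι).length - (l.length + 1))))
  | LDN.mid ι l => some (LDN.emit ι ((uOf G ι).drop ((uOf G ι).length - (l.length + 1))))
  | _ => none

lemma bin_partnerR {r} (hr : r ∈ (GkG G).rules) {B C : LDN G.NT T}
    (ho : r.output = [Symbol.nonterminal (some B), Symbol.nonterminal (some C)]) :
    partnerR G B = some C := by
  rcases gk_bin_descr G hr ho with
    ⟨σ, A, t, -, -, -, hpost, -, rfl, rfl⟩ | ⟨σ, A, t, -, -, -, -, -, rfl, rfl⟩ |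
    ⟨σ, A, t₁, t₂, -, -, -, hpost, -, rfl, rfl⟩ | ⟨σ, A, t₁, t₂, -, -, -, -, -, rfl, rfl⟩ |
    ⟨ι, A, u, t₁, t₂, s, -, -, -, rfl, hC⟩
  · simp [partnerR, if_pos hpost]
  · simp [partnerR]
  · simp [partnerR, hpost]
  · simp [partnerR]
  · exact (show partnerR G (LDN.emit ι (t₁ :: t₂ :: s)) = spellSnd ι t₂ s from rfl).trans
      hC.symm

lemma bin_partnerL {r} (hr : r ∈ (GkG G).rules) {B C : LDN G.NT T}
    (ho : r.output = [Symbol.nonterminal (some B), Symbol.nonterminal (some C)]) :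
    partnerL G C = some B := by
  rcases gk_bin_descr G hr ho with
    ⟨σ, A, t, -, -, -, -, -, rfl, rfl⟩ | ⟨σ, A, t, -, -, -, -, -, rfl, rfl⟩ |
    ⟨σ, A, t₁, t₂, -, -, -, -, -, rfl, rfl⟩ | ⟨σ, A, t₁, t₂, -, -, -, -, -, rfl, rfl⟩ |
    ⟨ι, A, u, t₁, t₂, s, hctx, hsuf, -, rfl, hC⟩
  · simp [partnerL]
  · simp [partnerL]
  · simp [partnerL]
  · simp [partnerL]
  · have huof := spellCtx_uOf G hctx
    subst huof
    rcases spellSnd_cases G hC with ⟨rfl, rfl⟩ | ⟨hs, rfl⟩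
    · simp only [partnerL, Option.some.injEq, LDN.emit.injEq, true_and]
      have := drop_suffix_eq (u := uOf G ι) (l := [t₁, t₂]) hsuf
      simp only [List.length_cons, List.length_nil] at this ⊢
      rw [this]
    · simp only [partnerL, Option.some.injEq, LDN.emit.injEq, true_and]
      have := drop_suffix_eq (u := uOf G ι) (l := t₁ :: t₂ :: s) hsuf
      simp only [List.length_cons] at this ⊢
      rw [this]

lemma bin_left_shape {r} (hr : r ∈ (GkG G).rules) {B C : LDN G.NT T}
    (ho : r.output = [Symbol.nonterminal (some B), Symbol.nonterminal (some C)]) :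
    (∃ σ, B = LDN.emitL σ) ∨ (∃ σ t, B = LDN.cont σ ∧ σ.post = some t) ∨
    (∃ ι t₁ t₂ s, B = LDN.emit ι (t₁ :: t₂ :: s)) := by
  rcases gk_bin_descr G hr ho with
    ⟨σ, A, t, -, -, -, -, -, rfl, -⟩ | ⟨σ, A, t, -, -, -, hpost, -, rfl, -⟩ |
    ⟨σ, A, t₁, t₂, -, -, -, -, -, rfl, -⟩ | ⟨σ, A, t₁, t₂, -, -, -, hpost, -, rfl, -⟩ |
    ⟨ι, A, u, t₁, t₂, s, -, -, -, rfl, -⟩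
  · exact Or.inl ⟨σ, rfl⟩
  · exact Or.inr (Or.inl ⟨σ, t, rfl, hpost⟩)
  · exact Or.inl ⟨σ, rfl⟩
  · exact Or.inr (Or.inl ⟨σ, t₂, rfl, hpost⟩)
  · exact Or.inr (Or.inr ⟨ι, t₁, t₂, s, rfl⟩)

lemma bin_right_shape {r} (hr : r ∈ (GkG G).rules) {B C : LDN G.NT T}
    (ho : r.output = [Symbol.nonterminal (some B), Symbol.nonterminal (some C)]) :
    (∃ σ, C = LDN.cont σ ∧ σ.post = none) ∨ (∃ σ, C = LDN.emitP σ) ∨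
    (∃ σ, C = LDN.midc σ) ∨ (∃ ι t, C = LDN.emit ι [t]) ∨ (∃ ι l, C = LDN.mid ι l) := by
  rcases gk_bin_descr G hr ho with
    ⟨σ, A, t, -, -, -, hpost, -, rfl, rfl⟩ | ⟨σ, A, t, -, -, -, -, -, rfl, rfl⟩ |
    ⟨σ, A, t₁, t₂, -, -, -, -, -, rfl, rfl⟩ | ⟨σ, A, t₁, t₂, -, -, -, -, -, rfl, rfl⟩ |
    ⟨ι, A, u, t₁, t₂, s, -, -, -, rfl, hC⟩
  · exact Or.inl ⟨σ, rfl, hpost⟩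
  · exact Or.inr (Or.inl ⟨σ, rfl⟩)
  · exact Or.inr (Or.inr (Or.inl ⟨σ, rfl⟩))
  · exact Or.inr (Or.inl ⟨σ, rfl⟩)
  · rcases spellSnd_cases G hC with ⟨-, rfl⟩ | ⟨-, rfl⟩
    · exact Or.inr (Or.inr (Or.inr (Or.inl ⟨ι, t₂, rfl⟩)))
    · exact Or.inr (Or.inr (Or.inr (Or.inr ⟨ι, t₂ :: s, rfl⟩)))

lemma gk_binary_of_output {r} (hr : r ∈ (GkG G).rules) {A B : Option (LDN G.NT T)}
    (ho : r.output = [Symbol.nonterminal A, Symbol.nonterminal B]) :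
    ∃ n₁ n₂ : LDN G.NT T, A = some n₁ ∧ B = some n₂ ∧
      r.output = [Symbol.nonterminal (some n₁), Symbol.nonterminal (some n₂)] := by
  rcases gk_shape G r hr with ⟨h1, -⟩ | ⟨t, h1⟩ | ⟨n₁, n₂, h1⟩
  · rw [ho] at h1; simp at h1
  · rw [ho] at h1; simp at h1
  · refine ⟨n₁, n₂, ?_, ?_, h1⟩ <;>
    · have := ho.symm.trans h1
      simp only [List.cons.injEq, Symbol.nonterminal.injEq, and_true] at this
      tauto

lemma gk_cond2 : ∀ r ∈ (GkG G).rules, ∀ a : T, r.output = [Symbol.terminal a] →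
    r.input ≠ (GkG G).initial → ∀ r' ∈ (GkG G).rules, r'.input = r.input → r' = r := by
  intro r hr a ho hni r' hr' hin
  have hni2 : r.input ≠ none := hni
  rcases gk_shape G r' hr' with ⟨h1', h2'⟩ | ⟨a', h1'⟩ | ⟨n₁', n₂', h1'⟩
  · exfalso; rw [h2'] at hin; exact hni2 hin.symm
  · have hni2' : r'.input ≠ none := by rw [hin]; exact hni2
    rcases gk_term_descr G hr ho hni2 with
      ⟨σ, A, hσ, hA, hpre, hre⟩ | ⟨σ, A, hσ, hA, hpost, hre⟩ |
      ⟨ι, A, u, s, hctx, hsuf, hl2, hre⟩ <;>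
    rcases gk_term_descr G hr' h1' hni2' with
      ⟨σ', A', hσ', hA', hpre', hre'⟩ | ⟨σ', A', hσ', hA', hpost', hre'⟩ |
      ⟨ι', A'', u', s', hctx', hsuf', hl2', hre'⟩ <;>
    subst hre <;> subst hre' <;> injection hin with e <;>
    first
    | (simp at e; done)
    | (injection e with e1
       subst e1
       first
       | (rw [hpre] at hpre'
          injection hpre' with e2
          rw [e2])
       | (rw [hpost] at hpost'
          injection hpost' with e2
          rw [e2]))
    | (injection e with e1 e2
       subst e1
       injection e2 with e3 e4
       subst e3
       subst e4
       rfl)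
  · exfalso
    rcases gk_term_descr G hr ho hni2 with
      ⟨σ, A, -, -, -, hre⟩ | ⟨σ, A, -, -, -, hre⟩ | ⟨ι, A, u, s, -, -, -, hre⟩ <;>
    subst hre <;>
    rcases bin_input_shape G hr' h1' with h0 | ⟨σ0, h0⟩ | ⟨σ0, h0⟩ | ⟨ι0, v0, h0⟩ <;>
    rw [h0] at hin <;>
    first
    | exact hni2 hin.symm
    | (injection hin with e; simp at e)

lemma gk_cond3 : ∀ r ∈ (GkG G).rules, ∀ r' ∈ (GkG G).rules,
    ∀ A B B' : (GkG G).NT,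
      r.output = [Symbol.nonterminal A, Symbol.nonterminal B] →
      r'.output ≠ [Symbol.nonterminal B', Symbol.nonterminal A] := by
  intro r hr r' hr' A B B' hout heq
  obtain ⟨n₁, n₂, hA1, hB1, hsh⟩ := gk_binary_of_output G hr hout
  obtain ⟨m₁, m₂, hB1', hA2, hsh'⟩ := gk_binary_of_output G hr' heq
  have hnm : n₁ = m₂ := by
    rw [hA1] at hA2
    injection hA2
  rcases bin_left_shape G hr hsh with ⟨σ, hL⟩ | ⟨σ, t, hL, hLp⟩ | ⟨ι, t₁, t₂, s, hL⟩ <;>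
  rcases bin_right_shape G hr' hsh' with
    ⟨σ', hR, hRp⟩ | ⟨σ', hR⟩ | ⟨σ', hR⟩ | ⟨ι', t', hR⟩ | ⟨ι', l', hR⟩ <;>
  have e := hL.symm.trans (hnm.trans hR) <;>
  first
  | (simp at e; done)
  | (injection e with e1
     rw [e1] at hLp
     rw [hRp] at hLp
     simp at hLp)

lemma gk_cond4 : ∀ r ∈ (GkG G).rules, ∀ r' ∈ (GkG G).rules,
    ∀ A A' B B' : (GkG G).NT,
      r.output = [Symbol.nonterminal A, Symbol.nonterminal B] →
      r'.output = [Symbol.nonterminal A', Symbol.nonterminal B'] →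
      (B = B' → A = A') ∧ (A = A' → B = B') := by
  intro r hr r' hr' A A' B B' ho ho'
  obtain ⟨n₁, n₂, rfl, rfl, hsh⟩ := gk_binary_of_output G hr ho
  obtain ⟨m₁, m₂, rfl, rfl, hsh'⟩ := gk_binary_of_output G hr' ho'
  constructor
  · intro hBB
    have e2 : n₂ = m₂ := by injection hBB
    have p1 := bin_partnerL G hr hsh
    have p2 := bin_partnerL G hr' hsh'
    rw [e2, p2] at p1
    injection p1.symm with e
    rw [e]
  · intro hAA
    have e1 : n₁ = m₁ := by injection hAA
    have p1 := bin_partnerR G hr hsh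
    have p2 := bin_partnerR G hr' hsh'
    rw [e1, p2] at p1
    injection p1 with e
    rw [e]

lemma gk_n3 : ∀ r ∈ (GkG G).rules, ∀ A B : (GkG G).NT,
    r.output = [Symbol.nonterminal A, Symbol.nonterminal B] →
    (RewritesToTerminal (GkG G) A ∨ RewritesToTerminal (GkG G) B) := by
  intro r hr A B ho
  obtain ⟨n₁, n₂, rfl, rfl, hsh⟩ := gk_binary_of_output G hr ho
  rcases gk_bin_descr G hr hsh with
    ⟨σ, A', t, hσ, hA', hpre, hpost, -, rfl, -⟩ | ⟨σ, A', t, hσ, hA', hpre, hpost, -, -, rfl⟩ |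
    ⟨σ, A', t₁, t₂, hσ, hA', hpre, hpost, -, rfl, -⟩ |
    ⟨σ, A', t₁, t₂, hσ, hA', hpre, hpost, -, -, rfl⟩ |
    ⟨ι, A', u, t₁, t₂, s, hctx, hsuf, -, rfl, -⟩
  · -- left emitL σ
    refine Or.inl ⟨⟨some (LDN.emitL σ), [Symbol.terminal t]⟩, ?_, rfl, t, rfl⟩
    refine (mem_GkG_rules G).mpr (Or.inr (Or.inl ⟨σ, A', hσ, hA', ?_⟩))
    rcases σ with ⟨Xs, pre, tgt, post⟩
    simp only at hpre hpost
    subst hpre; subst hpost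
    simp [stRules]
  · -- right emitP σ
    refine Or.inr ⟨⟨some (LDN.emitP σ), [Symbol.terminal t]⟩, ?_, rfl, t, rfl⟩
    refine (mem_GkG_rules G).mpr (Or.inr (Or.inl ⟨σ, A', hσ, hA', ?_⟩))
    rcases σ with ⟨Xs, pre, tgt, post⟩
    simp only at hpre hpost
    subst hpre; subst hpost
    simp [stRules]
  · -- left emitL σ (both-sided step)
    refine Or.inl ⟨⟨some (LDN.emitL σ), [Symbol.terminal t₁]⟩, ?_, rfl, t₁, rfl⟩
    refine (mem_GkG_rules G).mpr (Or.inr (Or.inl ⟨σ, A', hσ, hA', ?_⟩))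
    rcases σ with ⟨Xs, pre, tgt, post⟩
    simp only at hpre hpost
    subst hpre; subst hpost
    simp [stRules]
  · -- right emitP σ (both-sided step)
    refine Or.inr ⟨⟨some (LDN.emitP σ), [Symbol.terminal t₂]⟩, ?_, rfl, t₂, rfl⟩
    refine (mem_GkG_rules G).mpr (Or.inr (Or.inl ⟨σ, A', hσ, hA', ?_⟩))
    rcases σ with ⟨Xs, pre, tgt, post⟩
    simp only at hpre hpost
    subst hpre; subst hpost
    simp [stRules]
  · -- left emit
    refine Or.inl ⟨⟨some (LDN.emit ι (t₁ :: t₂ :: s)), [Symbol.terminal t₁]⟩, ?_, rfl, t₁, rfl⟩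
    have hul : 2 ≤ u.length := le_trans (by simp) hsuf.length_le
    rcases hctx with ⟨σ, υ, rfl, hσ, hυ, hsrc, hA', rfl⟩ | ⟨υ, rfl, hυ, hsrc, rfl, rfl⟩
    · exact (mem_GkG_rules G).mpr (Or.inr (Or.inr (Or.inl ⟨σ, υ, A', hσ, hυ, hsrc, hA',
        spell_emit_mem G A' hsuf hul⟩)))
    · exact (mem_GkG_rules G).mpr (Or.inr (Or.inr (Or.inr ⟨υ, hυ, hsrc,
        spell_emit_mem G none hsuf hul⟩)))

lemma gk_chomsky : IsChomskyNF (GkG G) := by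
  constructor
  · intro r hr
    rcases gk_shape G r hr with ⟨h1, h2⟩ | ⟨t, h1⟩ | ⟨n₁, n₂, h1⟩
    · exact Or.inr (Or.inr ⟨h2, h1⟩)
    · exact Or.inr (Or.inl ⟨t, h1⟩)
    · exact Or.inl ⟨some n₁, some n₂, h1⟩
  · exact gk_no_none_rhs G

lemma gkG_isLinearDyckNF : IsLinearDyckNF (GkG G) :=
  ⟨⟨gk_chomsky G, gk_cond2 G, gk_cond3 G, gk_cond4 G⟩, gk_n3 G⟩

end DyckMain

end Dir1



/-- For each linear grammar `G` there exists a grammar in linear-Dyck normal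
form generating the same language, and conversely every grammar in linear-Dyck normal form
generates a linear language. -/
theorem linear_iff_linearDyckNF :
    (∀ G : ContextFreeGrammar.{0} T, IsLinear G →
      ∃ Gk : ContextFreeGrammar.{0} T, IsLinearDyckNF Gk ∧ G.language = Gk.language) ∧
    (∀ Gk : ContextFreeGrammar.{0} T, IsLinearDyckNF Gk →
      ∃ G : ContextFreeGrammar.{0} T, IsLinear G ∧ G.language = Gk.language) := by
  constructor
  · intro G hlin
    exact ⟨GkG G, gkG_isLinearDyckNF G, dir1_language G hlin⟩
  · intro Gk hk
    exact ⟨mkLinear Gk, dir2_isLinear hk, dir2_language hk⟩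

end CS
end

section
/- Let G_k = (N_k, T, P_k, S) be a context-free grammar in Dyck normal form, let w ∈ L(G_k), let D be a leftmost derivation of w, and let t_{w,D} be the trace-word of w associated with D. If [_i is a bracket such that the pair [_i, ]_i belongs to N^(1) ∪ N^(2)_l (i.e., φ([_i) ∈ T), then every occurrence of [_i in t_{w,D} is immediately followed by its pairwise bracket ]_i. -/
namespace CS

/-! ### Grammars: Chomsky and Dyck normal forms -/

variable {T : Type}

section Aux
variable {g : ContextFreeGrammar T} (A B : g.NT)

def GoodAB (u : List (Symbol T g.NT)) : Prop :=
  ∀ j : ℕ, u[j]? = some (Symbol.nonterminal A) → u[j+1]? = some (Symbol.nonterminal B)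

variable {A B}

lemma goodAB_append {x y : List (Symbol T g.NT)}
    (hx : ∀ c ∈ x, c ≠ Symbol.nonterminal A) (hy : GoodAB A B y) : GoodAB A B (x ++ y) := by
  intro j hj
  rcases lt_or_ge j x.length with h | h
  · rw [List.getElem?_append_left h] at hj
    exact absurd rfl (hx _ (List.mem_of_getElem? hj))
  · rw [List.getElem?_append_right h] at hj
    rw [List.getElem?_append_right (le_trans h (Nat.le_succ j))]
    have : j + 1 - x.length = (j - x.length) + 1 := by omega
    rw [this]
    exact hy _ hj

lemma goodAB_of_append {x y : List (Symbol T g.NT)} (h : GoodAB A B (x ++ y)) :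
    GoodAB A B y := by
  intro j hj
  have h1 := h (x.length + j) (by
    rw [List.getElem?_append_right (Nat.le_add_right _ _)]
    simpa using hj)
  rw [List.getElem?_append_right (by omega)] at h1
  have : x.length + j + 1 - x.length = j + 1 := by omega
  rwa [this] at h1

lemma leftmost_decomp_unique {p q : List T} {C D : g.NT} {s s' : List (Symbol T g.NT)}
    (h : p.map Symbol.terminal ++ Symbol.nonterminal C :: s
       = q.map Symbol.terminal ++ Symbol.nonterminal D :: s') : C = D := by
  induction p generalizing q with
  | nil =>
    cases q with
    | nil => simp at h; exact h.1
    | cons b q => simp at h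
  | cons a p ih =>
    cases q with
    | nil => simp at h
    | cons b q =>
      simp only [List.map_cons, List.cons_append, List.cons.injEq] at h
      exact ih h.2

lemma goodAB_step
    (hout : ∀ r ∈ g.rules, ∀ X Y : g.NT,
        r.output = [Symbol.nonterminal X, Symbol.nonterminal Y] → Y ≠ A ∧ (X = A → Y = B))
    (hchom : ∀ r ∈ g.rules,
      (∃ X Y : g.NT, r.output = [Symbol.nonterminal X, Symbol.nonterminal Y]) ∨
      (∃ a : T, r.output = [Symbol.terminal a]) ∨ r.output = [])
    (hne : A ≠ B)
    {u v : List (Symbol T g.NT)} {C : g.NT}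
    (h : LeftmostStep g u v C) (hu : GoodAB A B u) : GoodAB A B v := by
  obtain ⟨r, hr, hin, p, s, huE, hvE⟩ := h
  have hs : GoodAB A B s := by
    apply goodAB_of_append (x := p.map Symbol.terminal ++ [Symbol.nonterminal C])
    simpa [huE] using hu
  have hpterm : ∀ c ∈ p.map (Symbol.terminal (N := g.NT)), c ≠ Symbol.nonterminal A := by
    intro c hc
    obtain ⟨t, _, rfl⟩ := List.mem_map.mp hc
    simp
  rcases hchom r hr with ⟨X, Y, hXY⟩ | ⟨a, ha⟩ | h0
  · by_cases hXA : X = A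
    · subst hXA
      have hYB := (hout r hr X Y hXY).2 rfl
      subst hYB
      rw [hvE, hXY]
      rw [List.append_assoc]
      apply goodAB_append hpterm
      intro j hj
      match j with
      | 0 => simp
      | 1 => simp at hj; exact absurd hj.symm hne
      | (k+2) =>
        simp only [List.cons_append, List.getElem?_cons_succ] at hj ⊢
        exact hs k hj
    · have hYA := (hout r hr X Y hXY).1
      rw [hvE, hXY]
      apply goodAB_append _ hs
      intro c hc
      rcases List.mem_append.mp hc with hc | hc
      · exact hpterm c hc
      · simp only [List.mem_cons, List.not_mem_nil, or_false] at hc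
        rcases hc with rfl | rfl <;> simp_all
  · rw [hvE, ha]
    apply goodAB_append _ hs
    intro c hc
    rcases List.mem_append.mp hc with hc | hc
    · exact hpterm c hc
    · simp_all
  · rw [hvE, h0]
    apply goodAB_append _ hs
    intro c hc
    rcases List.mem_append.mp hc with hc | hc
    · exact hpterm c hc
    · simp at hc

lemma key_trace
    (hout : ∀ r ∈ g.rules, ∀ X Y : g.NT,
        r.output = [Symbol.nonterminal X, Symbol.nonterminal Y] → Y ≠ A ∧ (X = A → Y = B))
    (hchom : ∀ r ∈ g.rules,
      (∃ X Y : g.NT, r.output = [Symbol.nonterminal X, Symbol.nonterminal Y]) ∨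
      (∃ a : T, r.output = [Symbol.terminal a]) ∨ r.output = [])
    (hne : A ≠ B)
    (hArule : ∀ r ∈ g.rules, r.input = A → ∃ a : T, r.output = [Symbol.terminal a])
    {u v : List (Symbol T g.NT)} {l : List g.NT}
    (h : LmTrace g u v l) (hu : GoodAB A B u) :
    GoodAB A B v ∧ ∀ m : ℕ, l[m]? = some A →
      (l[m+1]? = some B ∨ (m + 1 = l.length ∧
        ∃ (q : List T) (s : List (Symbol T g.NT)),
          v = q.map Symbol.terminal ++ Symbol.nonterminal B :: s)) := by
  induction h with
  | refl => exact ⟨hu, by simp⟩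
  | @tail v' v l C huv hstep ih =>
    obtain ⟨hgv', ihm⟩ := ih
    have hgv : GoodAB A B v := goodAB_step hout hchom hne hstep hgv'
    refine ⟨hgv, ?_⟩
    intro m hm
    set n := l.length with hn
    rcases lt_trichotomy m n with hmn | hmn | hmn
    · rw [List.getElem?_append_left hmn] at hm
      rcases ihm m hm with hB | ⟨hlast, q, s, hv'⟩
      · -- l[m+1]? = some B; ensure m+1 < n
        have hm1 : m + 1 < n := by
          by_contra hcon
          have : l[m+1]? = none := List.getElem?_eq_none (by omega)
          rw [this] at hB; cases hB
        left
        rw [List.getElem?_append_left hm1]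
        exact hB
      · -- the step rewrites the leftmost nonterminal of v', which is B
        obtain ⟨r, hr, hin, p, s', hv'E, hvE⟩ := hstep
        have hCB : C = B := leftmost_decomp_unique (hv'E.symm.trans hv')
        left
        rw [hlast, List.getElem?_append_right (le_refl _), Nat.sub_self]
        simp [hCB]
    · -- m = n : the step rewrote A
      subst hmn
      have hCA : C = A := by
        rw [List.getElem?_append_right (le_refl _)] at hm
        simpa using hm
      subst hCA
      obtain ⟨r, hr, hin, p, s, hv'E, hvE⟩ := hstep
      obtain ⟨a, ha⟩ := hArule r hr hin
      -- from GoodAB v', the symbol after this C ( = A) is B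
      have h1 : v'[p.length]? = some (Symbol.nonterminal C) := by
        rw [hv'E, List.getElem?_append_right (by simp)]
        simp
      have h2 := hgv' p.length h1
      have h3 : s[0]? = some (Symbol.nonterminal B) := by
        rw [hv'E, List.getElem?_append_right (by simp)] at h2
        simpa using h2
      obtain ⟨s'', rfl⟩ : ∃ s'', s = Symbol.nonterminal B :: s'' := by
        cases s with
        | nil => simp at h3
        | cons c s'' => simp at h3; exact ⟨s'', by rw [h3]⟩
      right
      refine ⟨by simp [hn], p ++ [a], s'', ?_⟩
      rw [hvE, ha]
      simp
    · right; exfalso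
      have : (l ++ [C])[m]? = none := List.getElem?_eq_none (by simp; omega)
      rw [this] at hm; cases hm
end Aux

/-- In a grammar in Dyck normal form, if `([ᵢ, ]ᵢ)` is a bracket pair whose
left bracket rewrites to a terminal (`φ([ᵢ) ∈ T`, i.e. the pair lies in `N⁽¹⁾ ∪ N⁽²⁾_l`),
then in any trace-word every occurrence of `[ᵢ` is immediately followed by `]ᵢ`. -/
theorem n1_left_bracket_followed (g : ContextFreeGrammar T) (hg : IsDyckNF g)
    (w : List T) (t : List g.NT) (ht : IsTraceWord g w t) (A B : g.NT)
    (hpair : ∃ r ∈ g.rules, r.output = [Symbol.nonterminal A, Symbol.nonterminal B])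
    (hA : RewritesToTerminal g A) :
    ∀ m : ℕ, t[m]? = some A → t[m + 1]? = some B := by
  obtain ⟨r0, hr0, hr0out⟩ := hpair
  obtain ⟨⟨hchom1, hSnot⟩, hterm, hflip, huniq⟩ := hg
  obtain ⟨rA, hrA, hrAin, a, hrAout⟩ := hA
  have hAS : A ≠ g.initial := by
    intro h
    exact hSnot r0 hr0 (by rw [hr0out, ← h]; simp)
  have hout : ∀ r ∈ g.rules, ∀ X Y : g.NT,
      r.output = [Symbol.nonterminal X, Symbol.nonterminal Y] → Y ≠ A ∧ (X = A → Y = B) := by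
    intro r hr X Y hXY
    constructor
    · intro hYA
      exact hflip r0 hr0 r hr A B X hr0out (by rw [hXY, hYA])
    · intro hXA
      exact (huniq r hr r0 hr0 X A Y B hXY hr0out).2 hXA
  have hne : A ≠ B := fun h => (hout r0 hr0 A B hr0out).1 h.symm
  have hchom : ∀ r ∈ g.rules,
      (∃ X Y : g.NT, r.output = [Symbol.nonterminal X, Symbol.nonterminal Y]) ∨
      (∃ a : T, r.output = [Symbol.terminal a]) ∨ r.output = [] := by
    intro r hr
    rcases hchom1 r hr with h | h | ⟨_, h⟩
    exacts [Or.inl h, Or.inr (Or.inl h), Or.inr (Or.inr h)]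
  have hArule : ∀ r ∈ g.rules, r.input = A → ∃ b : T, r.output = [Symbol.terminal b] := by
    intro r hr hin
    have := hterm rA hrA a hrAout (by rw [hrAin]; exact hAS) r hr (by rw [hin, hrAin])
    exact ⟨a, this ▸ hrAout⟩
  have hgood0 : GoodAB A B [Symbol.nonterminal g.initial] := by
    intro j hj
    match j with
    | 0 => simp at hj; exact absurd hj.symm hAS
    | k+1 => simp at hj
  obtain ⟨_, hmain⟩ := key_trace hout hchom hne hArule ht.2 hgood0
  intro m hm
  have hm' : (g.initial :: t)[m+1]? = some A := by simpa using hm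
  rcases hmain (m+1) hm' with hB | ⟨_, q, s, heq⟩
  · simpa using hB
  · exfalso
    have hmem : Symbol.nonterminal B ∈ w.map (Symbol.terminal (N := g.NT)) := by
      rw [heq]; simp
    simp at hmem

end CS
end

section
/- (Chomsky–Schützenberger theorem) For each context-free language L there exist an integer K, a regular language R over the 2K bracket symbols, and a monoid homomorphism h from strings over the bracket symbols to strings over the terminal alphabet, such that L = h(D_K ∩ R). -/
namespace CS

/-! ### Grammars: Chomsky and Dyck normal forms -/

variable {T : Type}

section Dev
open ContextFreeGrammar

variable {T : Type}

/-! ### Generalized Dyck words -/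

inductive GDyck {α : Type*} : List (α × Bool) → Prop
  | pair (i : α) : GDyck [(i, true), (i, false)]
  | wrap (i : α) {w : List (α × Bool)} (hw : GDyck w) : GDyck ((i, true) :: w ++ [(i, false)])
  | concat {u v : List (α × Bool)} (hu : GDyck u) (hv : GDyck v) : GDyck (u ++ v)

lemma GDyck.map {α β : Type*} (f : α → β) {w : List (α × Bool)} (hw : GDyck w) :
    GDyck (w.map (Prod.map f id)) := by
  induction hw with
  | pair i => exact GDyck.pair (f i)
  | wrap i hw ih => simpa using GDyck.wrap (f i) ih
  | concat hu hv ihu ihv => simpa using GDyck.concat ihu ihv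

lemma isDyck_of_gdyck {k : ℕ} {w : List (Bracket k)} (hw : GDyck w) : IsDyck w := by
  induction hw with
  | pair i => exact IsDyck.pair i
  | wrap i hw ih => exact IsDyck.wrap i ih
  | concat hu hv ihu ihv => exact IsDyck.concat ihu ihv

lemma gdyck_of_isDyck {k : ℕ} {w : List (Bracket k)} (hw : IsDyck w) : GDyck w := by
  induction hw with
  | pair i => exact GDyck.pair i
  | wrap i hw ih => exact GDyck.wrap i ih
  | concat hu hv ihu ihv => exact GDyck.concat ihu ihv

lemma GDyck.decomp {α : Type*} {w : List (α × Bool)} (hw : GDyck w) :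
    ∃ (c : α) (u v : List (α × Bool)), w = (c, true) :: u ++ (c, false) :: v ∧
      (u = [] ∨ GDyck u) ∧ (v = [] ∨ GDyck v) := by
  induction hw with
  | pair i => exact ⟨i, [], [], rfl, Or.inl rfl, Or.inl rfl⟩
  | wrap i hw ih => exact ⟨i, _, [], by simp, Or.inr hw, Or.inl rfl⟩
  | @concat u v hu hv ihu ihv =>
    obtain ⟨c, a, b, rfl, ha, hb⟩ := ihu
    refine ⟨c, a, b ++ v, by simp, ha, ?_⟩
    rcases hb with rfl | hb
    · exact Or.inr hv
    · exact Or.inr (GDyck.concat hb hv)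

lemma GDyck.ne_nil {α : Type*} {w : List (α × Bool)} (hw : GDyck w) : w ≠ [] := by
  obtain ⟨c, u, v, rfl, -, -⟩ := hw.decomp; simp

lemma GDyck.head_open {α : Type*} {w : List (α × Bool)} (hw : GDyck w) :
    ∃ c : α, w.head? = some (c, true) := by
  obtain ⟨c, u, v, rfl, -, -⟩ := hw.decomp; exact ⟨c, rfl⟩

/-! ### Step-counted derivations -/

variable {g : ContextFreeGrammar.{0} T}

inductive DerIn (g : ContextFreeGrammar.{0} T) :
    List (Symbol T g.NT) → List (Symbol T g.NT) → ℕ → Prop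
  | refl (u : List (Symbol T g.NT)) : DerIn g u u 0
  | head {u v w : List (Symbol T g.NT)} {n : ℕ} (h : g.Produces u v) (hd : DerIn g v w n) :
      DerIn g u w (n + 1)

lemma DerIn.derives {u w : List (Symbol T g.NT)} {n : ℕ} (h : DerIn g u w n) : g.Derives u w := by
  induction h with
  | refl u => rfl
  | head h hd ih => exact h.trans_derives ih

lemma derives_derIn {u w : List (Symbol T g.NT)} (h : g.Derives u w) : ∃ n, DerIn g u w n := by
  induction h using Relation.ReflTransGen.head_induction_on with
  | refl => exact ⟨0, DerIn.refl w⟩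
  | head h _ ih => obtain ⟨n, hn⟩ := ih; exact ⟨n + 1, DerIn.head h hn⟩

lemma no_rewrite_nil {r : ContextFreeRule T g.NT} {v : List (Symbol T g.NT)}
    (h : r.Rewrites [] v) : False := by cases h

lemma DerIn.nil_eq {w : List (Symbol T g.NT)} {n : ℕ} (h : DerIn g [] w n) : w = [] := by
  cases h with
  | refl => rfl
  | head h hd => obtain ⟨r, -, hr⟩ := h; exact absurd hr no_rewrite_nil

lemma no_rewrite_terminal {r : ContextFreeRule T g.NT} {a : T} {v : List (Symbol T g.NT)}
    (h : r.Rewrites [Symbol.terminal a] v) : False := by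
  cases h with
  | cons x hrs => exact no_rewrite_nil hrs

lemma DerIn.terminal_eq {a : T} {w : List (Symbol T g.NT)} {n : ℕ}
    (h : DerIn g [Symbol.terminal a] w n) : w = [Symbol.terminal a] := by
  cases h with
  | refl => rfl
  | head h hd => obtain ⟨r, -, hr⟩ := h; exact absurd hr no_rewrite_terminal

lemma rewrites_single_nt {r : ContextFreeRule T g.NT} {A : g.NT} {v : List (Symbol T g.NT)}
    (h : r.Rewrites [Symbol.nonterminal A] v) : r.input = A ∧ v = r.output := by
  cases h with
  | head s => exact ⟨rfl, by simp⟩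
  | cons x hrs => exact absurd hrs no_rewrite_nil

lemma append_eq_append_singleton {u v p q : List (Symbol T g.NT)} {s : Symbol T g.NT}
    (h : u ++ v = p ++ [s] ++ q) :
    (∃ q₁, u = p ++ [s] ++ q₁ ∧ q = q₁ ++ v) ∨ (∃ p₂, v = p₂ ++ [s] ++ q ∧ p = u ++ p₂) := by
  rw [List.append_assoc] at h
  rcases List.append_eq_append_iff.mp h with ⟨a', ha1, ha2⟩ | ⟨c', hc1, hc2⟩
  · right; exact ⟨a', by rw [ha2, List.append_assoc], ha1⟩
  · cases c' with
    | nil => right; exact ⟨[], by simpa using hc2.symm, by simpa using hc1.symm⟩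
    | cons x c'' =>
      left
      obtain ⟨rfl, hq⟩ : s = x ∧ q = c'' ++ v := by
        have := hc2; simp at this; exact ⟨this.1, this.2⟩
      exact ⟨c'', by rw [hc1]; simp, hq⟩

lemma DerIn.split {n : ℕ} {u v w : List (Symbol T g.NT)} (h : DerIn g (u ++ v) w n) :
    ∃ w₁ w₂ n₁ n₂, w = w₁ ++ w₂ ∧ n₁ + n₂ = n ∧ DerIn g u w₁ n₁ ∧ DerIn g v w₂ n₂ := by
  generalize hs : u ++ v = s at h
  induction h generalizing u v with
  | refl z => exact ⟨u, v, 0, 0, hs.symm, rfl, DerIn.refl u, DerIn.refl v⟩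
  | @head s x w n hp hd ih =>
    obtain ⟨r, hr, hrw⟩ := hp
    obtain ⟨p, q, hpq, hx⟩ := hrw.exists_parts
    subst hs
    rcases append_eq_append_singleton hpq with ⟨q₁, hu, rfl⟩ | ⟨p₂, hv, rfl⟩
    · have hx' : (p ++ r.output ++ q₁) ++ v = x := by rw [hx]; simp
      obtain ⟨w₁, w₂, n₁, n₂, hw, hn, h1, h2⟩ := ih hx'
      refine ⟨w₁, w₂, n₁ + 1, n₂, hw, by omega, ?_, h2⟩
      refine DerIn.head ⟨r, hr, ?_⟩ h1
      rw [hu]; exact r.rewrites_of_exists_parts p q₁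
    · have hx' : u ++ (p₂ ++ r.output ++ q) = x := by rw [hx]; simp
      obtain ⟨w₁, w₂, n₁, n₂, hw, hn, h1, h2⟩ := ih hx'
      refine ⟨w₁, w₂, n₁, n₂ + 1, hw, by omega, h1, ?_⟩
      refine DerIn.head ⟨r, hr, ?_⟩ h2
      rw [hv]; exact r.rewrites_of_exists_parts p₂ q

/-! ### The bracket alphabet -/

variable (g)

def RR : Type := {r : ContextFreeRule T g.NT // r ∈ g.rules}

instance : Fintype (RR g) := by unfold RR; infer_instance

def MM : ℕ := (g.rules.sup fun r => r.output.length) + 1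

def Idx : Type := RR g × Fin (MM g)

instance : Fintype (Idx g) := by unfold Idx; infer_instance

abbrev BB : Type := Idx g × Bool

variable {g}

def nn (ρ : RR g) : ℕ := ρ.1.output.length

lemma nn_lt_MM (ρ : RR g) : nn ρ < MM g :=
  Nat.lt_succ_of_le (Finset.le_sup (f := fun r => r.output.length) ρ.2)

variable (g)

def code (ρ : RR g) (i : ℕ) : Idx g := (ρ, ⟨i % MM g, Nat.mod_lt _ (Nat.succ_pos _)⟩)

def opb (ρ : RR g) (i : ℕ) : BB g := (code g ρ i, true)

def clb (ρ : RR g) (i : ℕ) : BB g := (code g ρ i, false)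

variable {g}

@[simp] lemma code_fst (ρ : RR g) (i : ℕ) : (code g ρ i).1 = ρ := rfl

lemma code_val {i : ℕ} (ρ : RR g) (hi : i < MM g) : ((code g ρ i).2 : ℕ) = i := by
  simp [code, Nat.mod_eq_of_lt hi]

lemma code_eta (c : Idx g) : code g c.1 (c.2 : ℕ) = c := by
  obtain ⟨ρ, i⟩ := c
  simp [code, Fin.ext_iff, Nat.mod_eq_of_lt i.2]
  rfl

lemma code_inj {ρ ρ' : RR g} {i j : ℕ} (hi : i < MM g) (hj : j < MM g)
    (h : code g ρ i = code g ρ' j) : ρ = ρ' ∧ i = j := by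
  obtain ⟨h1, h2⟩ := Prod.mk.injEq .. ▸ h
  refine ⟨h1, ?_⟩
  have := congrArg Fin.val h2
  simpa [Nat.mod_eq_of_lt hi, Nat.mod_eq_of_lt hj] using this

def termAt (ρ : RR g) (i : ℕ) : Option T :=
  (ρ.1.output[i]?).bind fun s => match s with
    | .terminal a => some a
    | .nonterminal _ => none

def hmap (b : BB g) : List T := if b.2 then (termAt b.1.1 (b.1.2 : ℕ)).toList else []

lemma hmap_opb_terminal {ρ : RR g} {i : ℕ} {a : T} (hi : i < MM g)
    (h : ρ.1.output[i]? = some (.terminal a)) : hmap (opb g ρ i) = [a] := by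
  simp [hmap, opb, code_fst, code_val ρ hi, termAt, h]

lemma hmap_opb_other {ρ : RR g} {i : ℕ} (hi : i < MM g)
    (h : ∀ a : T, ρ.1.output[i]? ≠ some (.terminal a)) : hmap (opb g ρ i) = [] := by
  simp only [hmap, opb, if_pos, code_fst, code_val ρ hi, termAt]
  cases hs : ρ.1.output[i]? with
  | none => simp [hs]
  | some s => cases s with
    | terminal a => exact absurd hs (h a)
    | nonterminal A => simp [hs]

lemma hmap_clb (ρ : RR g) (i : ℕ) : hmap (clb g ρ i) = [] := rfl

/-! ### The local (regular) constraints -/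

variable (g)

def Follow (x y : BB g) : Prop :=
  let ρ := x.1.1
  let i : ℕ := (x.1.2 : ℕ)
  if x.2 then
    (((∃ a, ρ.1.output[i]? = some (.terminal a)) ∨ ρ.1.output = []) ∧ y = clb g ρ i) ∨
    (∃ (A : g.NT) (ρ' : RR g), ρ.1.output[i]? = some (.nonterminal A) ∧
      ρ'.1.input = A ∧ y = opb g ρ' 0)
  else
    (i + 1 < nn ρ ∧ y = opb g ρ (i + 1)) ∨
    (nn ρ ≤ i + 1 ∧ ∃ (ρ' : RR g) (j : ℕ), j < nn ρ' ∧
      ρ'.1.output[j]? = some (.nonterminal ρ.1.input) ∧ y = clb g ρ' j)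

def FstL (b : BB g) : Prop := ∃ ρ : RR g, ρ.1.input = g.initial ∧ b = opb g ρ 0

def LstL (b : BB g) : Prop := ∃ ρ : RR g, ρ.1.input = g.initial ∧ b = clb g ρ (nn ρ - 1)

def Rlang : Language (BB g) :=
  {d | (∃ b ∈ d.head?, FstL g b) ∧ (∃ b ∈ d.getLast?, LstL g b) ∧ List.IsChain (Follow g) d}

/-! ### Tree encodings -/

inductive Code : (g.NT ⊕ (RR g × ℕ × ℕ)) → List (BB g) → Prop
  | node (ρ : RR g) {d : List (BB g)} (hn : 0 < nn ρ) (h : Code (.inr (ρ, 0, nn ρ)) d) :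
      Code (.inl ρ.1.input) d
  | node0 (ρ : RR g) (h : ρ.1.output = []) : Code (.inl ρ.1.input) [opb g ρ 0, clb g ρ 0]
  | done (ρ : RR g) (i : ℕ) : Code (.inr (ρ, i, i)) []
  | term (ρ : RR g) (i j : ℕ) (a : T) (hij : i < j) (hj : j ≤ nn ρ)
      (hi : ρ.1.output[i]? = some (.terminal a)) {d : List (BB g)}
      (hd : Code (.inr (ρ, i + 1, j)) d) : Code (.inr (ρ, i, j)) (opb g ρ i :: clb g ρ i :: d)
  | nt (ρ : RR g) (i j : ℕ) (A : g.NT) (hij : i < j) (hj : j ≤ nn ρ)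
      (hi : ρ.1.output[i]? = some (.nonterminal A)) {e d : List (BB g)}
      (he : Code (.inl A) e) (hd : Code (.inr (ρ, i + 1, j)) d) :
      Code (.inr (ρ, i, j)) (opb g ρ i :: (e ++ clb g ρ i :: d))

variable {g}

lemma getLast?_cons_ne {α : Type*} {a : α} {l : List α} (h : l ≠ []) :
    (a :: l).getLast? = l.getLast? := by
  cases l with
  | nil => exact absurd rfl h
  | cons b t => exact List.getLast?_cons_cons ..

lemma follow_open_close {ρ : RR g} {i : ℕ} (hi : i < MM g)
    (h : (∃ a, ρ.1.output[i]? = some (.terminal a)) ∨ ρ.1.output = []) :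
    Follow g (opb g ρ i) (clb g ρ i) := by
  simp only [Follow, opb, if_pos, code_fst, code_val ρ hi]
  exact Or.inl ⟨h, trivial⟩

lemma follow_open_nt {ρ ρ' : RR g} {i : ℕ} {A : g.NT} (hi : i < MM g)
    (h : ρ.1.output[i]? = some (.nonterminal A)) (hin : ρ'.1.input = A) :
    Follow g (opb g ρ i) (opb g ρ' 0) := by
  simp only [Follow, opb, if_pos, code_fst, code_val ρ hi]
  exact Or.inr ⟨A, ρ', h, hin, rfl⟩

lemma follow_close_open {ρ : RR g} {i : ℕ} (hi : i < MM g) (h : i + 1 < nn ρ) :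
    Follow g (clb g ρ i) (opb g ρ (i + 1)) := by
  simp only [Follow, clb, code_fst, code_val ρ hi, if_neg, Bool.false_eq_true, not_false_iff]
  exact Or.inl ⟨h, trivial⟩

lemma follow_close_close {ρ ρ' : RR g} {i j : ℕ} (hi : i < MM g) (h : nn ρ ≤ i + 1)
    (hj : j < nn ρ') (hg : ρ'.1.output[j]? = some (.nonterminal ρ.1.input)) :
    Follow g (clb g ρ i) (clb g ρ' j) := by
  simp only [Follow, clb, code_fst, code_val ρ hi, if_neg, Bool.false_eq_true, not_false_iff]
  exact Or.inr ⟨h, ρ', j, hj, hg, rfl⟩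

/-- Structural facts about encodings (forward direction). -/
lemma Code.struct {x : g.NT ⊕ (RR g × ℕ × ℕ)} {d : List (BB g)} (h : Code g x d) :
    (match x with
      | .inl A => GDyck d ∧ List.IsChain (Follow g) d ∧
          (∃ ρ : RR g, ρ.1.input = A ∧ d.head? = some (opb g ρ 0)) ∧
          (∃ ρ : RR g, ρ.1.input = A ∧ d.getLast? = some (clb g ρ (nn ρ - 1)))
      | .inr (ρ, i, j) => (i = j → d = []) ∧
          (i < j → GDyck d ∧ List.IsChain (Follow g) d ∧
            d.head? = some (opb g ρ i) ∧ d.getLast? = some (clb g ρ (j - 1)))) := by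
  induction h with
  | @node ρ d hn h ih =>
    obtain ⟨hgd, hch, hhd, hlast⟩ := ih.2 hn
    exact ⟨hgd, hch, ⟨ρ, rfl, hhd⟩, ⟨ρ, rfl, hlast⟩⟩
  | node0 ρ h =>
    have hM : 0 < MM g := Nat.succ_pos _
    refine ⟨GDyck.pair (code g ρ 0), ?_, ⟨ρ, rfl, rfl⟩, ⟨ρ, rfl, ?_⟩⟩
    · exact List.isChain_pair.mpr (follow_open_close hM (Or.inr h))
    · have h0 : nn ρ - 1 = 0 := by simp [nn, h]
      rw [h0]
      rfl
  | done ρ i =>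
    exact ⟨fun _ => rfl, fun hlt => absurd hlt (lt_irrefl i)⟩
  | @term ρ i j a hij hj hi d hd ih =>
    have hiM : i < MM g := lt_of_lt_of_le hij (le_trans hj (le_of_lt (nn_lt_MM ρ)))
    refine ⟨fun h => absurd h (Nat.ne_of_lt hij), fun _ => ?_⟩
    rcases Nat.eq_or_lt_of_le (Nat.succ_le_of_lt hij) with hj1 | hj1
    · -- j = i + 1, d = []
      have hd0 : d = [] := ih.1 hj1
      subst hd0
      refine ⟨GDyck.pair (code g ρ i), ?_, rfl, ?_⟩
      · exact List.isChain_pair.mpr (follow_open_close hiM (Or.inl ⟨a, hi⟩))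
      · rw [show j - 1 = i by omega]
        rfl
    · obtain ⟨hgd, hch, hhd, hlast⟩ := ih.2 hj1
      have hdne : d ≠ [] := hgd.ne_nil
      refine ⟨?_, ?_, rfl, ?_⟩
      · exact GDyck.concat (GDyck.pair (code g ρ i)) hgd
      · rw [List.isChain_cons_cons]
        refine ⟨follow_open_close hiM (Or.inl ⟨a, hi⟩), ?_⟩
        rw [List.isChain_cons]
        refine ⟨?_, hch⟩
        intro y hy
        rw [hhd] at hy
        cases hy
        exact follow_close_open hiM (lt_of_lt_of_le hj1 hj)
      · rw [getLast?_cons_ne (by simp), getLast?_cons_ne hdne, hlast]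
  | @nt ρ i j A hij hj hi e d he hd ihe ihd =>
    have hiM : i < MM g := lt_of_lt_of_le hij (le_trans hj (le_of_lt (nn_lt_MM ρ)))
    obtain ⟨hgde, hche, ⟨ρ₁, hρ₁, hhde⟩, ⟨ρ₂, hρ₂, hlaste⟩⟩ := ihe
    have hene : e ≠ [] := hgde.ne_nil
    refine ⟨fun h => absurd h (Nat.ne_of_lt hij), fun _ => ?_⟩
    have hwrap : GDyck (opb g ρ i :: e ++ [clb g ρ i]) := GDyck.wrap (code g ρ i) hgde
    have hch2 : List.IsChain (Follow g) (clb g ρ i :: d) := by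
      rw [List.isChain_cons]
      refine ⟨?_, ?_⟩
      · intro y hy
        rcases Nat.eq_or_lt_of_le (Nat.succ_le_of_lt hij) with hj1 | hj1
        · rw [ihd.1 hj1] at hy; cases hy
        · obtain ⟨-, -, hhdd, -⟩ := ihd.2 hj1
          rw [hhdd] at hy
          cases hy
          exact follow_close_open hiM (lt_of_lt_of_le hj1 hj)
      · rcases Nat.eq_or_lt_of_le (Nat.succ_le_of_lt hij) with hj1 | hj1
        · rw [ihd.1 hj1]; exact List.isChain_nil
        · exact (ihd.2 hj1).2.1
    refine ⟨?_, ?_, rfl, ?_⟩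
    · rcases Nat.eq_or_lt_of_le (Nat.succ_le_of_lt hij) with hj1 | hj1
      · rw [ihd.1 hj1]
        simpa using hwrap
      · have hgdd := (ihd.2 hj1).1
        have := GDyck.concat hwrap hgdd
        simpa using this
    · rw [List.isChain_cons]
      constructor
      · intro y hy
        rw [List.head?_append_of_ne_nil _ hene] at hy
        rw [hhde] at hy
        cases hy
        exact follow_open_nt hiM hi hρ₁
      · rw [List.isChain_append]
        refine ⟨hche, hch2, ?_⟩
        intro x hx y hy
        rw [hlaste] at hx
        cases hx
        cases hy
        have h1 : nn ρ₂ ≤ (nn ρ₂ - 1) + 1 := by omega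
        refine follow_close_close (lt_of_le_of_lt (Nat.sub_le _ _) (nn_lt_MM ρ₂)) h1
          (lt_of_lt_of_le hij hj) ?_
        rw [hρ₂, hi]
    · rw [getLast?_cons_ne (by simp), List.getLast?_append]
      rcases Nat.eq_or_lt_of_le (Nat.succ_le_of_lt hij) with hj1 | hj1
      · rw [ihd.1 hj1]
        rw [show j - 1 = i by omega]
        rfl
      · obtain ⟨-, -, -, hlastd⟩ := ihd.2 hj1
        have hdne : d ≠ [] := (ihd.2 hj1).1.ne_nil
        rw [getLast?_cons_ne hdne, hlastd]
        simp

/-- Yield of encodings (forward direction). -/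
lemma Code.yield {x : g.NT ⊕ (RR g × ℕ × ℕ)} {d : List (BB g)} (h : Code g x d) :
    (match x with
      | .inl A => g.Derives [Symbol.nonterminal A] ((d.flatMap hmap).map Symbol.terminal)
      | .inr (ρ, i, j) =>
          g.Derives ((ρ.1.output.drop i).take (j - i)) ((d.flatMap hmap).map Symbol.terminal)) := by
  induction h with
  | @node ρ d hn h ih =>
    simp only at ih ⊢
    have h1 : Produces g [Symbol.nonterminal ρ.1.input] ρ.1.output :=
      ⟨ρ.1, ρ.2, ContextFreeRule.Rewrites.input_output⟩
    refine h1.trans_derives ?_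
    simpa [List.take_of_length_le (le_of_eq (rfl : nn ρ = ρ.1.output.length).symm)] using ih
  | node0 ρ h =>
    simp only
    have h1 : Produces g [Symbol.nonterminal ρ.1.input] ρ.1.output :=
      ⟨ρ.1, ρ.2, ContextFreeRule.Rewrites.input_output⟩
    rw [h] at h1
    have hop : hmap (opb g ρ 0) = [] := by
      apply hmap_opb_other (lt_of_le_of_lt (Nat.zero_le _) (nn_lt_MM ρ))
      intro a ha
      rw [h] at ha; simp at ha
    simpa [List.flatMap, hop, hmap_clb] using h1.single
  | done ρ i => simpa using Derives.refl (g := g) []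
  | @term ρ i j a hij hj hi d hd ih =>
    simp only at ih ⊢
    have hlen : i < ρ.1.output.length := lt_of_lt_of_le hij hj
    have hval : ρ.1.output[i] = Symbol.terminal a := by
      have := List.getElem?_eq_getElem hlen
      rw [this] at hi
      exact Option.some.injEq .. ▸ hi
    rw [List.drop_eq_getElem_cons hlen, hval,
      show j - i = (j - (i + 1)) + 1 by omega, List.take_succ_cons,
      List.flatMap_cons, List.flatMap_cons,
      hmap_opb_terminal (lt_of_lt_of_le hij (le_trans hj (le_of_lt (nn_lt_MM ρ)))) hi, hmap_clb]
    have := ih.append_left [Symbol.terminal a]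
    simpa using this
  | @nt ρ i j A hij hj hi e d he hd ihe ihd =>
    simp only at ihe ihd ⊢
    have hlen : i < ρ.1.output.length := lt_of_lt_of_le hij hj
    have hval : ρ.1.output[i] = Symbol.nonterminal A := by
      have := List.getElem?_eq_getElem hlen
      rw [this] at hi
      exact Option.some.injEq .. ▸ hi
    have hop : hmap (opb g ρ i) = [] := by
      apply hmap_opb_other (lt_of_lt_of_le hij (le_trans hj (le_of_lt (nn_lt_MM ρ))))
      intro a ha
      rw [ha] at hi
      simp at hi
    rw [List.drop_eq_getElem_cons hlen, hval,
      show j - i = (j - (i + 1)) + 1 by omega, List.take_succ_cons,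
      List.flatMap_cons, List.flatMap_append, List.flatMap_cons, hop, hmap_clb]
    have h1 := ihe.append_right ((ρ.1.output.drop (i + 1)).take (j - (i + 1)))
    have h2 := ihd.append_left ((e.flatMap hmap).map Symbol.terminal)
    simp only [List.nil_append, List.append_nil, List.map_append]
    exact h1.trans h2


lemma map_terminal_ne_single_nt {w : List T} {A : g.NT}
    (h : [Symbol.nonterminal A] = w.map Symbol.terminal) : False := by
  cases w <;> simp_all

lemma derin_to_code : ∀ μ : ℕ,
    (∀ (n : ℕ) (A : g.NT) (w : List T), (MM g + 2) * n ≤ μ →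
      DerIn g [Symbol.nonterminal A] (w.map Symbol.terminal) n →
      ∃ d, Code g (.inl A) d ∧ d.flatMap hmap = w) ∧
    (∀ (n : ℕ) (ρ : RR g) (i : ℕ) (w : List T),
      (MM g + 2) * n + (nn ρ - i) + 1 ≤ μ → i ≤ nn ρ →
      DerIn g (ρ.1.output.drop i) (w.map Symbol.terminal) n →
      ∃ d, Code g (.inr (ρ, i, nn ρ)) d ∧ d.flatMap hmap = w) := by
  intro μ
  induction μ with
  | zero =>
    constructor
    · intro n A w hμ hder
      have hn : n = 0 := by nlinarith
      subst hn
      generalize hz : w.map Symbol.terminal = z at hder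
      cases hder with
      | refl => exact absurd (map_terminal_ne_single_nt hz.symm) id
    · intro n ρ i w hμ
      omega
  | succ μ ih =>
    constructor
    · -- part 1
      intro n A w hμ hder
      generalize hz : w.map Symbol.terminal = z at hder
      cases hder with
      | refl => exact absurd (map_terminal_ne_single_nt hz.symm) id
      | @head _ v _ n' hp hd =>
        subst hz
        obtain ⟨r, hr, hrw⟩ := hp
        obtain ⟨hinput, rfl⟩ := rewrites_single_nt hrw
        set ρ : RR g := ⟨r, hr⟩ with hρ
        by_cases hout : r.output = []
        · rw [hout] at hd
          have hw : w = [] := by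
            have := hd.nil_eq
            simpa using this.symm
          subst hw
          refine ⟨[opb g ρ 0, clb g ρ 0], ?_, ?_⟩
          · have := Code.node0 (g := g) ρ hout
            rwa [show ρ.1.input = A from hinput] at this
          · simp [List.flatMap, hmap_clb]
            apply hmap_opb_other
            · exact lt_of_le_of_lt (Nat.zero_le _) (nn_lt_MM ρ)
            · intro a hget
              rw [show ρ.1.output = [] from hout] at hget
              simp at hget
        · have hnn : 0 < nn ρ := by
            simp only [nn]
            exact List.length_pos_iff.mpr hout
          have hμ' : (MM g + 2) * n' + (nn ρ - 0) + 1 ≤ μ := by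
            have h1 := nn_lt_MM ρ
            have h2 : (MM g + 2) * (n' + 1) = (MM g + 2) * n' + (MM g + 2) := by ring
            omega
          have hd0 : DerIn g (ρ.1.output.drop 0) (w.map Symbol.terminal) n' := by
            simpa using hd
          obtain ⟨d, hcode, hflat⟩ := ih.2 n' ρ 0 w hμ' (Nat.zero_le _) hd0
          refine ⟨d, ?_, hflat⟩
          have := Code.node (g := g) ρ hnn hcode
          rwa [show ρ.1.input = A from hinput] at this
    · -- part 2
      intro n ρ i w hμ hi hder
      rcases eq_or_lt_of_le hi with heq | hlt
      · subst heq
        rw [show ρ.1.output.drop (nn ρ) = [] from List.drop_length (l := ρ.1.output)] at hder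
        have hw : w = [] := by simpa using hder.nil_eq.symm
        subst hw
        exact ⟨[], Code.done ρ (nn ρ), rfl⟩
      · have hlen : i < ρ.1.output.length := hlt
        have hdrop : ρ.1.output.drop i = ρ.1.output[i] :: ρ.1.output.drop (i + 1) :=
          List.drop_eq_getElem_cons hlen
        have hget : ρ.1.output[i]? = some (ρ.1.output[i]) := by
          exact List.getElem?_eq_getElem hlen
        rw [hdrop, show (ρ.1.output[i] :: ρ.1.output.drop (i + 1)) =
          [ρ.1.output[i]] ++ ρ.1.output.drop (i + 1) from rfl] at hder
        obtain ⟨w₁, w₂, n₁, n₂, hw, hn, hd1, hd2⟩ := hder.split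
        obtain ⟨wt1, wt2, rfl, rfl, rfl⟩ := List.map_eq_append_iff.mp hw
        have hμ2 : (MM g + 2) * n₂ + (nn ρ - (i + 1)) + 1 ≤ μ := by
          have : (MM g + 2) * n₂ ≤ (MM g + 2) * n := Nat.mul_le_mul_left _ (by omega)
          omega
        obtain ⟨d₂, hcode2, hflat2⟩ := ih.2 n₂ ρ (i + 1) wt2 hμ2 hlt hd2
        cases hsym : ρ.1.output[i] with
        | terminal a =>
          rw [hsym] at hd1
          have hwt1 : wt1 = [a] := by
            have := hd1.terminal_eq
            cases wt1 with
            | nil => simp at this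
            | cons b t =>
              simp only [List.map_cons] at this
              obtain ⟨hb, ht⟩ := List.cons.injEq .. ▸ this
              cases hb
              cases t with
              | nil => rfl
              | cons c t' => simp at ht
          subst hwt1
          refine ⟨opb g ρ i :: clb g ρ i :: d₂,
            Code.term ρ i (nn ρ) a hlt le_rfl (by rw [hget, hsym]) hcode2, ?_⟩
          rw [List.flatMap_cons, List.flatMap_cons,
            hmap_opb_terminal (lt_trans hlt (nn_lt_MM ρ)) (by rw [hget, hsym]), hmap_clb, hflat2]
          simp
        | nonterminal A =>
          rw [hsym] at hd1
          have hμ1 : (MM g + 2) * n₁ ≤ μ := by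
            have : (MM g + 2) * n₁ ≤ (MM g + 2) * n := Nat.mul_le_mul_left _ (by omega)
            omega
          obtain ⟨e, hcodee, hflate⟩ := ih.1 n₁ A wt1 hμ1 hd1
          refine ⟨opb g ρ i :: (e ++ clb g ρ i :: d₂),
            Code.nt ρ i (nn ρ) A hlt le_rfl (by rw [hget, hsym]) hcodee hcode2, ?_⟩
          rw [List.flatMap_cons, List.flatMap_append, List.flatMap_cons,
            hmap_opb_other (lt_trans hlt (nn_lt_MM ρ)) (by rw [hget, hsym]; simp),
            hmap_clb, hflate, hflat2]
          simp

/-- Backward: derivations give encodings. -/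
lemma derives_to_code {w : List T}
    (h : g.Derives [Symbol.nonterminal g.initial] (w.map Symbol.terminal)) :
    ∃ d, Code g (.inl g.initial) d ∧ d.flatMap hmap = w := by
  obtain ⟨n, hn⟩ := derives_derIn h
  exact (derin_to_code ((MM g + 2) * n)).1 n g.initial w le_rfl hn

lemma follow_opb_elim {ρ : RR g} {i : ℕ} {y : BB g} (hiM : i < MM g)
    (h : Follow g (opb g ρ i) y) :
    (((∃ a, ρ.1.output[i]? = some (.terminal a)) ∨ ρ.1.output = []) ∧ y = clb g ρ i) ∨
    (∃ (A : g.NT) (ρ' : RR g), ρ.1.output[i]? = some (.nonterminal A) ∧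
      ρ'.1.input = A ∧ y = opb g ρ' 0) := by
  simpa [Follow, opb, clb, code_fst, code_val ρ hiM] using h

lemma follow_clb_elim {ρ : RR g} {i : ℕ} {y : BB g} (hiM : i < MM g)
    (h : Follow g (clb g ρ i) y) :
    (i + 1 < nn ρ ∧ y = opb g ρ (i + 1)) ∨
    (nn ρ ≤ i + 1 ∧ ∃ (ρ' : RR g) (j : ℕ), j < nn ρ' ∧
      ρ'.1.output[j]? = some (.nonterminal ρ.1.input) ∧ y = clb g ρ' j) := by
  simpa [Follow, opb, clb, code_fst, code_val ρ hiM] using h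

variable (g)

def KeyOut (d : List (BB g)) (ρ : RR g) (i : ℕ) : Prop :=
  (∃ j, i ≤ j ∧ j < nn ρ ∧ Code g (.inr (ρ, i, j + 1)) d ∧ d.getLast? = some (clb g ρ j)) ∨
  (nn ρ = 0 ∧ i = 0 ∧ d = [opb g ρ 0, clb g ρ 0])

def KeyHyp (N : ℕ) : Prop :=
  ∀ d : List (BB g), d.length ≤ N → GDyck d → ∀ (ρ : RR g) (i : ℕ), i < MM g →
    d.head? = some (opb g ρ i) → (i < nn ρ ∨ (i = 0 ∧ nn ρ = 0)) →
    List.IsChain (Follow g) d → KeyOut g d ρ i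

variable {g}

/-- Handling the continuation `v` after a closing bracket `clb ρ i`. -/
lemma key_cont {N : ℕ} (ih : KeyHyp g N) {v : List (BB g)} {ρ : RR g} {i : ℕ}
    (hvN : v.length ≤ N) (hv : v = [] ∨ GDyck v) (hchv : List.IsChain (Follow g) v)
    (hiM : i < MM g) (hin : i < nn ρ)
    (hcv : ∀ y ∈ v.head?, Follow g (clb g ρ i) y) :
    ∃ j, i ≤ j ∧ j < nn ρ ∧ Code g (.inr (ρ, i + 1, j + 1)) v ∧
      ((v = [] ∧ j = i) ∨ v.getLast? = some (clb g ρ j)) := by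
  rcases hv with rfl | hgv
  · exact ⟨i, le_rfl, hin, Code.done ρ (i + 1), Or.inl ⟨rfl, rfl⟩⟩
  · obtain ⟨c'', hhv⟩ := hgv.head_open
    have hf := hcv _ (by rw [hhv]; rfl)
    rw [← code_eta c''] at hf hhv
    rcases follow_clb_elim hiM hf with ⟨hi1, hy⟩ | ⟨-, ρ', j', -, -, hy⟩
    · -- next is opb ρ (i+1)
      rw [hy] at hhv
      have hi1M : i + 1 < MM g := lt_of_lt_of_le hi1 (le_of_lt (nn_lt_MM ρ))
      have := ih v hvN hgv ρ (i + 1) hi1M hhv (Or.inl hi1) hchv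
      rcases this with ⟨j, hij, hjn, hcode, hlast⟩ | ⟨hn0, -, -⟩
      · exact ⟨j, le_trans (Nat.le_succ i) hij, hjn, hcode, Or.inr hlast⟩
      · omega
    · -- next would be a closing bracket: impossible for a Dyck word
      exact absurd (congrArg Prod.snd hy) (by simp [clb])

lemma key : ∀ N : ℕ, KeyHyp g N := by
  intro N
  induction N with
  | zero =>
    intro d hN hgd ρ i hiM hhd hpos hch
    cases d with
    | nil => simp at hhd
    | cons a t => simp at hN
  | succ N ih =>
    intro d hN hgd ρ i hiM hhd hpos hch
    obtain ⟨c, u, v, rfl, hu, hv⟩ := hgd.decomp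
    have hceq : c = code g ρ i := by
      simp only [List.cons_append, List.head?_cons, Option.some.injEq, opb] at hhd ⊢
      exact (Prod.ext_iff.mp hhd).1
    subst hceq
    -- lengths
    have hlu : u.length ≤ N := by
      have := congrArg List.length (rfl :
        ((code g ρ i, true) :: u ++ (code g ρ i, false) :: v : List (BB g)) = _)
      simp at hN
      omega
    have hlv : v.length ≤ N := by
      simp at hN
      omega
    -- chain decomposition
    rw [show ((code g ρ i, true) :: u ++ (code g ρ i, false) :: v : List (BB g)) =
      (code g ρ i, true) :: (u ++ (code g ρ i, false) :: v) by simp] at hch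
    rw [List.isChain_cons] at hch
    obtain ⟨hch1, hch2⟩ := hch
    rw [List.isChain_append] at hch2
    obtain ⟨hchu, hchcv, hjun⟩ := hch2
    rw [List.isChain_cons] at hchcv
    obtain ⟨hcv1, hchv⟩ := hchcv
    rcases hpos with hin | ⟨hi0, hn0⟩
    · -- i < nn ρ : real position
      have hlen : i < ρ.1.output.length := hin
      have hgeti : ρ.1.output[i]? = some (ρ.1.output[i]) := by
        exact List.getElem?_eq_getElem hlen
      cases hsym : ρ.1.output[i] with
      | terminal a =>
        have hget : ρ.1.output[i]? = some (.terminal a) := by rw [hgeti, hsym]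
        -- u must be empty
        have hu0 : u = [] := by
          rcases hu with rfl | hgu
          · rfl
          · exfalso
            obtain ⟨c', hhu⟩ := hgu.head_open
            have hf := hch1 _ (by
              rw [List.head?_append_of_ne_nil _ hgu.ne_nil, hhu]; rfl)
            rcases follow_opb_elim hiM hf with ⟨-, hy⟩ | ⟨A, ρ', hgA, -, -⟩
            · exact absurd (congrArg Prod.snd hy) (by simp [clb])
            · rw [hget] at hgA
              simp at hgA
        subst hu0
        obtain ⟨j, hij, hjn, hcode, hlastv⟩ :=
          key_cont ih hlv hv hchv hiM hin hcv1
        refine Or.inl ⟨j, hij, hjn, ?_, ?_⟩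
        · exact Code.term ρ i (j + 1) a (by omega) (by omega) hget hcode
        · rcases hlastv with ⟨rfl, rfl⟩ | hlastv
          · exact List.getLast?_concat
          · have hvne : v ≠ [] := by
              intro hv0; rw [hv0] at hlastv; simp at hlastv
            rw [List.getLast?_append, getLast?_cons_ne hvne, hlastv]
            simp
      | nonterminal A =>
        have hget : ρ.1.output[i]? = some (.nonterminal A) := by rw [hgeti, hsym]
        -- u is nonempty: it is the subtree for A
        have hune : u ≠ [] := by
          rintro rfl
          have hf := hch1 _ (rfl : _ ∈ some ((code g ρ i, false) : BB g))
          rcases follow_opb_elim hiM hf with ⟨hcond, -⟩ | ⟨A', ρ', hgA, -, hy⟩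
          · rcases hcond with ⟨a, ha⟩ | hnil
            · rw [hget] at ha; simp at ha
            · rw [hnil] at hget; simp at hget
          · exact absurd (congrArg Prod.snd hy) (by simp [opb])
        have hgu : GDyck u := by
          rcases hu with rfl | hgu
          · exact absurd rfl hune
          · exact hgu
        obtain ⟨c', hhu⟩ := hgu.head_open
        have hf := hch1 _ (by
          rw [List.head?_append_of_ne_nil _ hune, hhu]; rfl)
        rcases follow_opb_elim hiM hf with ⟨-, hy⟩ | ⟨A', ρ₀, hgA, hinρ₀, hy⟩
        · exact absurd (congrArg Prod.snd hy) (by simp [clb])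
        · have hA' : A' = A := by
            rw [hget] at hgA
            simpa using hgA.symm
          rw [hA'] at hinρ₀
          rw [hy] at hhu
          -- recurse on u
          have hposu : 0 < nn ρ₀ ∨ (0 = 0 ∧ nn ρ₀ = 0) := by
            rcases Nat.eq_zero_or_pos (nn ρ₀) with h0 | h0
            · exact Or.inr ⟨rfl, h0⟩
            · exact Or.inl h0
          have hkeyu := ih u hlu hgu ρ₀ 0 (Nat.succ_pos _) hhu hposu hchu
          have hcode_u : Code g (.inl A) u := by
            rcases hkeyu with ⟨j₀, -, hj₀n, hcode_u, hlast_u⟩ | ⟨hn0, -, hueq⟩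
            · -- junction: the element after u is clb ρ i; it forces j₀ + 1 = nn ρ₀
              have hfj := hjun _ (by rw [hlast_u]; rfl) ((code g ρ i, false))
                (by rw [List.head?_cons]; rfl)
              have hj₀M : j₀ < MM g := lt_trans hj₀n (nn_lt_MM ρ₀)
              rcases follow_clb_elim hj₀M hfj with ⟨-, hy2⟩ | ⟨hle, -⟩
              · exact absurd (congrArg Prod.snd hy2) (by simp [opb])
              · have hfull : j₀ + 1 = nn ρ₀ := by omega
                rw [hfull] at hcode_u
                have := Code.node (g := g) ρ₀ (by omega) hcode_u
                rwa [hinρ₀] at this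
            · have hout0 : ρ₀.1.output = [] := by
                have : ρ₀.1.output.length = 0 := hn0
                exact List.length_eq_zero_iff.mp this
              rw [hueq]
              have := Code.node0 (g := g) ρ₀ hout0
              rwa [hinρ₀] at this
          -- continuation v
          obtain ⟨j, hij, hjn, hcode, hlastv⟩ :=
            key_cont ih hlv hv hchv hiM hin hcv1
          refine Or.inl ⟨j, hij, hjn, ?_, ?_⟩
          · exact Code.nt ρ i (j + 1) A (by omega) (by omega) hget hcode_u hcode
          · rcases hlastv with ⟨rfl, rfl⟩ | hlastv
            · exact List.getLast?_concat
            · have hvne : v ≠ [] := by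
                intro hv0; rw [hv0] at hlastv; simp at hlastv
              rw [List.getLast?_append, getLast?_cons_ne hvne, hlastv]
              simp
    · -- nn ρ = 0 : the empty-output rule
      subst hi0
      have hout0 : ρ.1.output = [] := List.length_eq_zero_iff.mp hn0
      have hu0 : u = [] := by
        rcases hu with rfl | hgu
        · rfl
        · exfalso
          obtain ⟨c', hhu⟩ := hgu.head_open
          have hf := hch1 _ (by
            rw [List.head?_append_of_ne_nil _ hgu.ne_nil, hhu]; rfl)
          rcases follow_opb_elim hiM hf with ⟨-, hy⟩ | ⟨A, ρ', hgA, -, -⟩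
          · exact absurd (congrArg Prod.snd hy) (by simp [clb])
          · rw [hout0] at hgA
            simp at hgA
      subst hu0
      have hv0 : v = [] := by
        rcases hv with rfl | hgv
        · rfl
        · exfalso
          obtain ⟨c'', hhv⟩ := hgv.head_open
          have hf := hcv1 _ (by rw [hhv]; rfl)
          rw [← code_eta c''] at hf hhv
          rcases follow_clb_elim hiM hf with ⟨hi1, -⟩ | ⟨-, ρ', j', -, -, hy⟩
          · omega
          · exact absurd (congrArg Prod.snd hy) (by simp [clb])
      subst hv0
      exact Or.inr ⟨hn0, rfl, rfl⟩

/-- Reverse: Dyck + local constraints give encodings. -/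
lemma dyck_local_to_code {d : List (BB g)} (hd : GDyck d) (hR : d ∈ Rlang g) :
    Code g (.inl g.initial) d := by
  obtain ⟨⟨b, hb, ρF, hFin, hbeq⟩, ⟨b', hb', ρL, hLin, hbeq'⟩, hch⟩ := hR
  rw [hbeq] at hb
  have hposF : 0 < nn ρF ∨ (0 = 0 ∧ nn ρF = 0) := by
    rcases Nat.eq_zero_or_pos (nn ρF) with h0 | h0
    · exact Or.inr ⟨rfl, h0⟩
    · exact Or.inl h0
  have hkey := key d.length d le_rfl hd ρF 0 (Nat.succ_pos _) hb hposF hch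
  rcases hkey with ⟨j, -, hjn, hcode, hlast⟩ | ⟨hn0, -, hdeq⟩
  · rw [hbeq'] at hb'
    rw [hlast] at hb'
    have : clb g ρF j = clb g ρL (nn ρL - 1) := by
      simpa using hb'
    have hinj := code_inj (lt_trans hjn (nn_lt_MM ρF))
      (lt_of_le_of_lt (Nat.sub_le _ _) (nn_lt_MM ρL)) (by
        simpa [clb, Prod.ext_iff] using this)
    obtain ⟨hρeq, hjeq⟩ := hinj
    have hfull : j + 1 = nn ρF := by
      subst hρeq
      omega
    rw [hfull] at hcode
    have := Code.node (g := g) ρF (by omega) hcode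
    rwa [hFin] at this
  · rw [hdeq]
    have hout0 : ρF.1.output = [] := List.length_eq_zero_iff.mp hn0
    have := Code.node0 (g := g) ρF hout0
    rwa [hFin] at this

/-! ### Regularity -/

variable (g)

open Classical in
noncomputable def dfa : DFA (BB g) (Option (Option (BB g))) where
  step s a := match s with
    | none => none
    | some none => if FstL g a then some (some a) else none
    | some (some b) => if Follow g b a then some (some a) else none
  start := some none
  accept := {s | ∃ b, s = some (some b) ∧ LstL g b}

variable {g}

lemma dfa_evalFrom_none (d : List (BB g)) : (dfa g).evalFrom none d = none := by
  induction d with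
  | nil => rfl
  | cons a t ih => exact ih

lemma dfa_evalFrom_some (d : List (BB g)) : ∀ b c : BB g,
    ((dfa g).evalFrom (some (some b)) d = some (some c) ↔
      List.IsChain (Follow g) (b :: d) ∧ (b :: d).getLast? = some c) := by
  induction d with
  | nil =>
    intro b c
    simp [DFA.evalFrom, List.isChain_singleton, eq_comm]
  | cons a t ih =>
    intro b c
    have hstep : (dfa g).evalFrom (some (some b)) (a :: t) =
        (dfa g).evalFrom ((dfa g).step (some (some b)) a) t := rfl
    by_cases hf : Follow g b a
    · have : (dfa g).step (some (some b)) a = some (some a) := by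
        simp [dfa, hf]
      rw [hstep, this, ih a c]
      rw [List.isChain_cons_cons, List.getLast?_cons_cons]
      tauto
    · have : (dfa g).step (some (some b)) a = none := by
        simp [dfa, hf]
      rw [hstep, this, dfa_evalFrom_none]
      simp only [List.isChain_cons_cons]
      constructor
      · intro h; cases h
      · rintro ⟨⟨h1, -⟩, -⟩; exact absurd h1 hf

lemma dfa_accepts : (dfa g).accepts = Rlang g := by
  ext d
  rw [DFA.mem_accepts]
  cases d with
  | nil =>
    constructor
    · rintro ⟨b, hb, -⟩
      simp [dfa, DFA.eval, DFA.evalFrom] at hb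
    · rintro ⟨⟨b, hb, -⟩, -⟩
      simp at hb
  | cons a t =>
    have hstep : (dfa g).eval (a :: t) = (dfa g).evalFrom ((dfa g).step (some none) a) t := rfl
    by_cases hf : FstL g a
    · have hs : (dfa g).step (some none) a = some (some a) := by simp [dfa, hf]
      rw [hstep, hs]
      constructor
      · rintro ⟨c, hc, hlst⟩
        obtain ⟨hch, hlast⟩ := (dfa_evalFrom_some t a c).mp hc
        exact ⟨⟨a, rfl, hf⟩, ⟨c, hlast, hlst⟩, hch⟩
      · rintro ⟨-, ⟨c, hlast, hlst⟩, hch⟩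
        exact ⟨c, (dfa_evalFrom_some t a c).mpr ⟨hch, hlast⟩, hlst⟩
    · have hs : (dfa g).step (some none) a = none := by simp [dfa, hf]
      rw [hstep, hs, dfa_evalFrom_none]
      constructor
      · rintro ⟨c, hc, -⟩; cases hc
      · rintro ⟨⟨b, hb, hfb⟩, -, -⟩
        simp only [List.head?_cons, Option.mem_def, Option.some.injEq] at hb
        subst hb
        exact absurd hfb hf

lemma Rlang_regular : (Rlang g).IsRegular :=
  ⟨Option (Option (BB g)), inferInstance, dfa g, dfa_accepts⟩

end Dev

/-- **Chomsky–Schützenberger theorem.** For each context-free language `L`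
there exist an integer `K`, a regular language `R` over the `2K` brackets, and a monoid
homomorphism `h` (given by its action on single brackets, extended by `List.flatMap`) such
that `L = h(D_K ∩ R)`. -/
theorem chomsky_schuetzenberger (L : Language T) (hL : L.IsContextFree) :
    ∃ (K : ℕ) (R : Language (Bracket K)) (h : Bracket K → List T),
      R.IsRegular ∧ ∀ w : List T, w ∈ L ↔ ∃ d, IsDyck d ∧ d ∈ R ∧ d.flatMap h = w := by
  obtain ⟨g, rfl⟩ := hL
  classical
  refine ⟨Fintype.card (Idx g), ?_, ?_, ?_, ?_⟩
  · exact {d' | d'.map (Prod.map (Fintype.equivFin (Idx g)).symm id) ∈ Rlang g}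
  · exact fun b => hmap (Prod.map (Fintype.equivFin (Idx g)).symm id b)
  · refine ⟨Option (Option (BB g)), inferInstance,
      (dfa g).comap (Prod.map (Fintype.equivFin (Idx g)).symm id), ?_⟩
    rw [DFA.accepts_comap, dfa_accepts]
    rfl
  · intro w
    set e := Fintype.equivFin (Idx g)
    have hcomp : ∀ d : List (BB g),
        (d.map (Prod.map e id)).map (Prod.map e.symm id) = d := by
      intro d
      rw [List.map_map]
      have : (Prod.map e.symm id ∘ Prod.map (⇑e) id) = (id : BB g → BB g) := by
        funext b
        simp [Prod.map]
      rw [this, List.map_id]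
    constructor
    · intro hw
      rw [ContextFreeGrammar.mem_language_iff] at hw
      obtain ⟨d, hcode, hflat⟩ := derives_to_code hw
      obtain ⟨hgd, hch, ⟨ρ₁, hρ₁, hhd⟩, ⟨ρ₂, hρ₂, hlast⟩⟩ := hcode.struct
      refine ⟨d.map (Prod.map e id), ?_, ?_, ?_⟩
      · exact isDyck_of_gdyck (hgd.map e)
      · show (d.map (Prod.map e id)).map (Prod.map e.symm id) ∈ Rlang g
        rw [hcomp]
        exact ⟨⟨opb g ρ₁ 0, by rw [hhd]; rfl, ρ₁, hρ₁, rfl⟩,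
          ⟨clb g ρ₂ (nn ρ₂ - 1), by rw [hlast]; rfl, ρ₂, hρ₂, rfl⟩, hch⟩
      · rw [List.flatMap_map]
        have heq : (fun a : BB g => hmap (Prod.map e.symm id (Prod.map e id a))) = hmap := by
          funext b
          simp [Prod.map]
        rw [show (fun a : BB g => hmap (Prod.map (⇑e.symm) id (Prod.map (⇑e) id a))) = hmap
          from heq]
        exact hflat
    · rintro ⟨d', hdyck, hR, rfl⟩
      have hgd : GDyck (d'.map (Prod.map e.symm id)) := (gdyck_of_isDyck hdyck).map e.symm
      have hcode := dyck_local_to_code hgd hR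
      have hy := hcode.yield
      simp only at hy
      rw [ContextFreeGrammar.mem_language_iff]
      rw [List.flatMap_map] at hy
      exact hy

end CS
end
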